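/- Lace expansion identity (Proposition 3.2, coefficient form): For every dimension d≥1, every λ∈[0,1], every n≥1 and every x∈ℤ^d, c_n^λ(0,x) = Σ_{u∈ℤ^d, |u|=1} c_{n−1}^λ(u,x) + Σ_{m=1}^{n} Σ_{v∈ℤ^d} π_m(v) c_{n−m}^λ(v,x), where π_m are the lace-expansion coefficients. (This is the coefficient identity equivalent to G_z^λ(0,x) = δ_{0,x} + z Σ_{|u|=1} G_z^λ(u,x) + Σ_v Π_z^λ(v) G_z^λ(v,x) for |z|<z_c(λ).) -/

import Mathlib

open scoped BigOperators ENNReal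
open scoped Classical

noncomputable section

namespace PrudentWalk

/-- Lattice points of `ℤ^d`. -/
abbrev Pt (d : ℕ) := Fin d → ℤ

/-- `ℓ¹`-norm on `ℤ^d`. -/
def norm1 {d : ℕ} (x : Pt d) : ℤ := ∑ i, |x i|

/-- Squared Euclidean norm of a lattice point, as a real number. -/
def norm2sq {d : ℕ} (x : Pt d) : ℝ := ∑ i, ((x i : ℝ))^2

/-- `w` is an `n`-step nearest-neighbour walk from `x` to `y`
(encoded as a function `ℕ → ℤ^d` frozen at `y` after time `n`). -/
def IsWalk {d : ℕ} (n : ℕ) (x y : Pt d) (w : ℕ → Pt d) : Prop :=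
  w 0 = x ∧ (∀ s, n ≤ s → w s = y) ∧ ∀ s < n, norm1 (w (s + 1) - w s) = 1

/-- The set `W_n(x,y)` of `n`-step nearest-neighbour walks from `x` to `y`. -/
def Walks (d n : ℕ) (x y : Pt d) := { w : ℕ → Pt d // IsWalk n x y w }

/-- `U_{st}(w) = -1` if `w(s) - w(t) ∈ ℕ₀ ⬝ (w(t) - w(t-1))`, and `0` otherwise. -/
def U {d : ℕ} (w : ℕ → Pt d) (s t : ℕ) : ℝ :=
  if ∃ m : ℕ, w s - w t = (m : ℤ) • (w t - w (t - 1)) then -1 else 0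

/-- `φ^λ(w) = ∏_{0 ≤ s < t ≤ n} (1 + λ U_{st}(w))` for an `n`-step walk `w`. -/
def phi {d : ℕ} (lam : ℝ) (n : ℕ) (w : ℕ → Pt d) : ℝ :=
  ∏ t ∈ Finset.range (n + 1), ∏ s ∈ Finset.range t, (1 + lam * U w s t)

/-- `c_n^λ(x,y)`. -/
def cps (d : ℕ) (lam : ℝ) (n : ℕ) (x y : Pt d) : ℝ :=
  ∑' w : Walks d n x y, phi lam n w.1

/-- `c_n^λ = Σ_x c_n^λ(0,x)`. -/
def cTot (d : ℕ) (lam : ℝ) (n : ℕ) : ℝ := ∑' x : Pt d, cps d lam n 0 x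

/-- The two-point function `G_z^λ(x,y) ∈ [0,∞]`. -/
def G (d : ℕ) (lam z : ℝ) (x y : Pt d) : ℝ≥0∞ :=
  ∑' n : ℕ, ENNReal.ofReal (cps d lam n x y) * ENNReal.ofReal z ^ n

/-- The susceptibility `χ^λ(z) ∈ [0,∞]`. -/
def chi (d : ℕ) (lam z : ℝ) : ℝ≥0∞ := ∑' x : Pt d, G d lam z 0 x

/-- The critical point `z_c(λ)`: the radius of convergence of the susceptibility
(a power series with nonnegative coefficients). -/
def zc (d : ℕ) (lam : ℝ) : ℝ := sSup { z : ℝ | 0 ≤ z ∧ chi d lam z < ⊤ }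

/-- `x ⊥ a` : `x` and `a` differ in at most one coordinate. -/
def Perp {d : ℕ} (x a : Pt d) : Prop := ∃ i : Fin d, ∀ j, j ≠ i → x j = a j

/-- The modified indicator `1_⊥`, with values in `[0,∞]`. -/
def indPerp (d : ℕ) (x : Pt d) : ℝ≥0∞ :=
  if Perp x 0 ∧ x ≠ 0 then ((d : ℝ≥0∞))⁻¹ else 0

/-- The modified indicator `1_⊥`, real-valued. -/
def indPerpReal (d : ℕ) (x : Pt d) : ℝ :=
  if Perp x 0 ∧ x ≠ 0 then (d : ℝ)⁻¹ else 0

/-- The prudent bubble diagram `B_z^λ ∈ [0,∞]`. -/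
def bubble (d : ℕ) (lam z : ℝ) : ℝ≥0∞ :=
  ⨆ y : Pt d, ∑' x₁ : Pt d, ∑' x₂ : Pt d,
    G d lam z 0 x₁ * G d lam z x₁ x₂ * indPerp d (x₂ - y)

/-- `k ⬝ x` for `k ∈ ℝ^d`, `x ∈ ℤ^d`. -/
def dotR {d : ℕ} (k : Fin d → ℝ) (x : Pt d) : ℝ := ∑ i, k i * (x i : ℝ)

/-- The Fourier transform `ĉ_n^λ(k)`. -/
def chat (d : ℕ) (lam : ℝ) (n : ℕ) (k : Fin d → ℝ) : ℂ :=
  ∑' x : Pt d, (cps d lam n 0 x : ℂ) * Complex.exp (Complex.I * (dotR k x : ℂ))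

/-! ### Laces -/

/-- `e` is an edge on the integer interval `[a,b]`. -/
def IsEdgeOn (a b : ℕ) (e : ℕ × ℕ) : Prop := a ≤ e.1 ∧ e.1 < e.2 ∧ e.2 ≤ b

/-- `Γ` is a connected graph on `[a,b]`. -/
def IsConnGraph (a b : ℕ) (Γ : Finset (ℕ × ℕ)) : Prop :=
  (∀ e ∈ Γ, IsEdgeOn a b e) ∧ (∃ e ∈ Γ, e.1 = a) ∧ (∃ e ∈ Γ, e.2 = b) ∧
    ∀ c : ℕ, a < c → c < b → ∃ e ∈ Γ, e.1 < c ∧ c < e.2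

/-- `L` is a lace on `[a,b]`: a minimally connected graph. -/
def IsLace (a b : ℕ) (L : Finset (ℕ × ℕ)) : Prop :=
  IsConnGraph a b L ∧ ∀ e ∈ L, ¬ IsConnGraph a b (L.erase e)

/-- The sequence `t₁, t₂, …` of the lace construction:
`t₁ = max{t : at ∈ Γ}`, `t_{i+1} = max{t : st ∈ Γ, s < t_i}`. -/
def tSeq (a : ℕ) (Γ : Finset (ℕ × ℕ)) : ℕ → ℕ
  | 0 => (Γ.filter fun e => e.1 = a).sup Prod.snd
  | (i + 1) => (Γ.filter fun e => e.1 < tSeq a Γ i).sup Prod.snd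

/-- `s_i = min{s : s t_i ∈ Γ}` of the lace construction. -/
def sOf (Γ : Finset (ℕ × ℕ)) (t : ℕ) : ℕ := sInf { s : ℕ | (s, t) ∈ Γ }

/-- The lace `𝓛_Γ` associated with a connected graph `Γ` on `[a,b]`. -/
def laceOf (a : ℕ) (Γ : Finset (ℕ × ℕ)) : Finset (ℕ × ℕ) :=
  (Finset.range (Γ.card + 1)).image fun i => (sOf Γ (tSeq a Γ i), tSeq a Γ i)

/-- The set `𝒞(L)` of edges on `[a,b]` compatible with the lace `L`. -/
def compat (a b : ℕ) (L : Finset (ℕ × ℕ)) : Finset (ℕ × ℕ) :=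
  (Finset.range (b + 1) ×ˢ Finset.range (b + 1)).filter fun e =>
    IsEdgeOn a b e ∧ e ∉ L ∧ laceOf a (insert e L) = L

/-- The set `𝓛_N[a,b]` of laces on `[a,b]` with exactly `N` edges. -/
def lacesN (a b N : ℕ) : Finset (Finset (ℕ × ℕ)) :=
  ((Finset.range (b + 1) ×ˢ Finset.range (b + 1)).powerset).filter fun L =>
    IsLace a b L ∧ L.card = N

/-- `∏_{st ∈ L} (-λ U_{st}(w)) ∏_{s't' ∈ 𝒞(L)} (1 + λ U_{s't'}(w))` for walks on `[0,n]`. -/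
def laceProd {d : ℕ} (lam : ℝ) (n : ℕ) (L : Finset (ℕ × ℕ)) (w : ℕ → Pt d) : ℝ :=
  (∏ e ∈ L, (-(lam * U w e.1 e.2))) * ∏ e ∈ compat 0 n L, (1 + lam * U w e.1 e.2)

/-- The lace-expansion coefficient `π_n^{(N)}(x)`. -/
def piN (d : ℕ) (lam : ℝ) (N n : ℕ) (x : Pt d) : ℝ :=
  lam ^ N * ∑' w : Walks d n 0 x, ∑ L ∈ lacesN 0 n N,
    (∏ e ∈ L, (-U w.1 e.1 e.2)) * ∏ e ∈ compat 0 n L, (1 + lam * U w.1 e.1 e.2)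

/-- The lace-expansion coefficient `π_n(x) = Σ_{N=1}^n (-1)^N π_n^{(N)}(x)`. -/
def piCoef (d : ℕ) (lam : ℝ) (n : ℕ) (x : Pt d) : ℝ :=
  ∑ N ∈ Finset.Icc 1 n, (-1 : ℝ) ^ N * piN d lam N n x

/-- `Π_z^{(N)}(x) = Σ_{n ≥ 1} z^n Σ_w Σ_L (…) ∈ [0,∞]` (all summands nonnegative). -/
def PiN (d : ℕ) (lam z : ℝ) (N : ℕ) (x : Pt d) : ℝ≥0∞ :=
  ∑' n : ℕ, ENNReal.ofReal (z ^ (n + 1)) *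
    ∑' w : Walks d (n + 1) 0 x, ∑ L ∈ lacesN 0 (n + 1) N,
      ENNReal.ofReal (laceProd lam (n + 1) L w.1)

/-- `Π_z^λ(x) = Σ_{N ≥ 1} (-1)^N Π_z^{(N)}(x)`. -/
def PiR (d : ℕ) (lam z : ℝ) (x : Pt d) : ℝ :=
  ∑' N : ℕ, (-1 : ℝ) ^ (N + 1) * (PiN d lam z (N + 1) x).toReal

/-! ### Analytic objects -/

/-- `Y_{z,k}^λ(x) = (1 - cos (k⬝x)) G_z^λ(x) ∈ [0,∞]`. -/
def Y (d : ℕ) (lam z : ℝ) (k : Fin d → ℝ) (x : Pt d) : ℝ≥0∞ :=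
  ENNReal.ofReal (1 - Real.cos (dotR k x)) * G d lam z 0 x

/-- Convolution of `[0,∞]`-valued functions on `ℤ^d`. -/
def econv {d : ℕ} (f g : Pt d → ℝ≥0∞) (x : Pt d) : ℝ≥0∞ := ∑' y : Pt d, f y * g (x - y)

/-- Sup-norm of a `[0,∞]`-valued function on `ℤ^d`. -/
def esup {d : ℕ} (f : Pt d → ℝ≥0∞) : ℝ≥0∞ := ⨆ x : Pt d, f x

/-- `D̂(k) = (1/d) Σ_i cos k_i`. -/
def Dhat (d : ℕ) (k : Fin d → ℝ) : ℝ := (1 / d) * ∑ i, Real.cos (k i)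

/-- The step distribution `D` of simple random walk. -/
def Dker (d : ℕ) (x : Pt d) : ℝ := if norm1 x = 1 then 1 / (2 * d) else 0

/-- `n`-fold convolution `D^{*n}`. -/
def Dn (d : ℕ) : ℕ → Pt d → ℝ
  | 0 => fun x => if x = 0 then 1 else 0
  | (n + 1) => fun x => ∑' y : Pt d, Dn d n y * Dker d (x - y)

/-- The function `𝒩_{a,b}(x)`, with values in `[0,∞]`. -/
def Nfun (d : ℕ) (a b x : Pt d) : ℝ≥0∞ :=
  if Perp a b ∧ a ≠ b ∧ norm1 (x - a) = 1 ∧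
      (∃ θ : ℝ, 0 ≤ θ ∧ θ ≤ 1 ∧ ∀ i, (x i : ℝ) = (a i : ℝ) + θ * ((b i : ℝ) - (a i : ℝ)))
    then ((d : ℝ≥0∞))⁻¹ else 0

/-- Helper padding a finite tuple of lattice points by `0`. -/
def padFn {d m : ℕ} (f : Fin m → Pt d) (j : ℕ) : Pt d :=
  if h : j < m then f ⟨j, h⟩ else 0

/-- The regularized indicator `1_{⊥,R}`. -/
def indPerpR (d : ℕ) (R : ℝ) (x : Pt d) : ℝ :=
  if Perp x 0 ∧ x ≠ 0 then (d : ℝ)⁻¹ * Real.exp (-(norm2sq x) / R) else 0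

/-- `1*_{⊥,R} = 1_{⊥,R} + δ₀`. -/
def indPerpRstar (d : ℕ) (R : ℝ) (x : Pt d) : ℝ :=
  indPerpR d R x + (if x = 0 then 1 else 0)

/-- `G_z^λ(x)` as a real number (for `z < z_c` the series is finite). -/
def Greal (d : ℕ) (lam z : ℝ) (x : Pt d) : ℝ := (G d lam z 0 x).toReal

/-- `χ^λ(z)` as a real number. -/
def chiR (d : ℕ) (lam z : ℝ) : ℝ := ∑' x : Pt d, Greal d lam z x

/-- `p(z) ∈ [0, 1/(2d))` defined by `1/(1 - 2 d p(z)) = χ^λ(z)`. -/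
def pz (d : ℕ) (lam z : ℝ) : ℝ := (chiR d lam z - 1) / (2 * d * chiR d lam z)

/-- `Ĉ_p(k) = 1 / (1 - 2 d p D̂(k))`. -/
def Chat (d : ℕ) (p : ℝ) (k : Fin d → ℝ) : ℝ := 1 / (1 - 2 * d * p * Dhat d k)

/-- The Fourier transform `Ĝ_z^λ(k)`. -/
def Ghat (d : ℕ) (lam z : ℝ) (k : Fin d → ℝ) : ℂ :=
  ∑' x : Pt d, (Greal d lam z x : ℂ) * Complex.exp (Complex.I * (dotR k x : ℂ))

/-- `U_{p}(k,ℓ)`. -/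
def Ubb (d : ℕ) (p : ℝ) (k l : Fin d → ℝ) : ℝ :=
  (Chat d p k)⁻¹ * (Chat d p (l - k) * Chat d p l + Chat d p (k + l) * Chat d p l
    + Chat d p (l - k) * Chat d p (k + l))

/-- `k ∈ [-π,π]^d`. -/
def inBox (d : ℕ) (k : Fin d → ℝ) : Prop := ∀ i, |k i| ≤ Real.pi

/-- `f₁(z) = 2 d z`. -/
def f1 (d : ℕ) (z : ℝ) : ℝ := 2 * d * z

/-- `f₂(z) = sup_k |Ĝ_z(k)| / Ĉ_{p(z)}(k)`. -/
def f2 (d : ℕ) (lam z : ℝ) : ℝ :=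
  sSup { r : ℝ | ∃ k : Fin d → ℝ, inBox d k ∧
    r = ‖Ghat d lam z k‖ / Chat d (pz d lam z) k }

/-- `f₃(z) = sup_{k,ℓ} |Δ_k Ĝ_z(ℓ)| / (2 U_{p(z)}(k,ℓ))`. -/
def f3 (d : ℕ) (lam z : ℝ) : ℝ :=
  sSup { r : ℝ | ∃ k l : Fin d → ℝ, inBox d k ∧ inBox d l ∧
    r = ‖Ghat d lam z (l + k) + Ghat d lam z (l - k) - 2 * Ghat d lam z l‖
      / (2 * Ubb d (pz d lam z) k l) }

/-- The bootstrap function `f(z) = max{f₁, f₂, f₃}`. -/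
def fB (d : ℕ) (lam z : ℝ) : ℝ := max (f1 d z) (max (f2 d lam z) (f3 d lam z))

/-- The Fourier transform `Π̂_z(k)` of the lace-expansion function. -/
def Pihat (d : ℕ) (lam z : ℝ) (k : Fin d → ℝ) : ℂ :=
  ∑' p : Pt d × ℕ, ((piCoef d lam (p.2 + 1) p.1 * z ^ (p.2 + 1) : ℝ) : ℂ)
    * Complex.exp (Complex.I * (dotR k p.1 : ℂ))

end PrudentWalk

namespace PrudentWalk

section Infra
variable {d : ℕ}

lemma U_congr {w w' : ℕ → Pt d} {s t : ℕ} (h1 : w s = w' s) (h2 : w t = w' t)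
    (h3 : w (t-1) = w' (t-1)) : U w s t = U w' s t := by
  unfold U; rw [h1, h2, h3]

/-- The finset of edges on `[a,b]`. -/
def edgeSet (a b : ℕ) : Finset (ℕ × ℕ) :=
  (Finset.range (b+1) ×ˢ Finset.range (b+1)).filter fun e => IsEdgeOn a b e

lemma mem_edgeSet {a b : ℕ} {e : ℕ × ℕ} : e ∈ edgeSet a b ↔ IsEdgeOn a b e := by
  simp only [edgeSet, Finset.mem_filter, Finset.mem_product, Finset.mem_range]
  constructor
  · rintro ⟨_, h⟩; exact h
  · rintro ⟨h1, h2, h3⟩; exact ⟨⟨by omega, by omega⟩, h1, h2, h3⟩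

lemma phi_eq_prod (lam : ℝ) (n : ℕ) (w : ℕ → Pt d) :
    phi lam n w = ∏ e ∈ edgeSet 0 n, (1 + lam * U w e.1 e.2) := by
  unfold phi
  rw [← Finset.prod_sigma (Finset.range (n+1)) (fun t => Finset.range t)
    (fun p => (1 + lam * U w p.2 p.1))]
  refine Finset.prod_nbij' (fun p => (p.2, p.1)) (fun e => ⟨e.2, e.1⟩) ?_ ?_ ?_ ?_ ?_
  · rintro ⟨t, s⟩ hp
    simp only [Finset.mem_sigma, Finset.mem_range] at hp
    show (s, t) ∈ edgeSet 0 n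
    exact mem_edgeSet.2 ⟨Nat.zero_le _, hp.2, by omega⟩
  · rintro ⟨s, t⟩ he
    obtain ⟨h1, h2, h3⟩ := mem_edgeSet.1 he
    show (⟨t, s⟩ : Σ _ : ℕ, ℕ) ∈ (Finset.range (n+1)).sigma (fun t => Finset.range t)
    simp only [Finset.mem_sigma, Finset.mem_range]
    omega
  · rintro ⟨t, s⟩ _; rfl
  · rintro ⟨s, t⟩ _; rfl
  · rintro ⟨t, s⟩ _; rfl

lemma norm1_nonneg (v : Pt d) : 0 ≤ norm1 v :=
  Finset.sum_nonneg fun i _ => abs_nonneg _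

lemma coord_le_norm1 (v : Pt d) (i : Fin d) : |v i| ≤ norm1 v :=
  Finset.single_le_sum (fun j _ => abs_nonneg (v j)) (Finset.mem_univ i)

lemma norm1_sub_le (a b c : Pt d) : norm1 (a - c) ≤ norm1 (a - b) + norm1 (b - c) := by
  unfold norm1
  rw [← Finset.sum_add_distrib]
  refine Finset.sum_le_sum fun i _ => ?_
  have : (a - c) i = (a - b) i + (b - c) i := by simp
  rw [this]; exact abs_add_le _ _

lemma isWalk_norm1_bound {n : ℕ} {x y : Pt d} {w : ℕ → Pt d} (hw : IsWalk n x y w)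
    (s : ℕ) : norm1 (w s - x) ≤ (n : ℤ) := by
  have key : ∀ s : ℕ, s ≤ n → norm1 (w s - x) ≤ (s : ℤ) := by
    intro s
    induction s with
    | zero => intro _; simp [hw.1, norm1]
    | succ s ih =>
      intro hs
      have h1 : norm1 (w (s+1) - w s) = 1 := hw.2.2 s (by omega)
      have h2 := norm1_sub_le (w (s+1)) (w s) x
      have h3 := ih (by omega)
      push_cast
      omega
  rcases le_or_gt s n with h | h
  · exact le_trans (key s h) (by exact_mod_cast Nat.cast_le.2 h)
  · have hs : w s = w n := by rw [hw.2.1 s (by omega), hw.2.1 n le_rfl]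
    rw [hs]; exact key n le_rfl

lemma isWalk_coord_bound {n : ℕ} {x y : Pt d} {w : ℕ → Pt d} (hw : IsWalk n x y w)
    (s : ℕ) (i : Fin d) : |w s i - x i| ≤ (n : ℤ) := by
  have h := coord_le_norm1 (w s - x) i
  have h2 := isWalk_norm1_bound hw s
  simp only [Pi.sub_apply] at h
  exact le_trans h h2

instance walksFinite (n : ℕ) (x y : Pt d) : Finite (Walks d n x y) := by
  classical
  let T := Fin (n+1) → ∀ i : Fin d, (Finset.Icc (x i - (n:ℤ)) (x i + (n:ℤ)) : Finset ℤ)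
  have : Function.Injective (fun (w : Walks d n x y) =>
      (fun s i => ⟨w.1 s i, by
        rw [Finset.mem_Icc]
        have := isWalk_coord_bound w.2 s i
        rw [abs_le] at this
        omega⟩ : T)) := by
    intro w w' h
    apply Subtype.ext
    funext s
    rcases le_or_gt s n with hs | hs
    · funext i
      have h3 := congrFun (congrFun h ⟨s, by omega⟩) i
      exact congrArg Subtype.val h3
    · rw [w.2.2.1 s (by omega), w'.2.2.1 s (by omega)]
  exact Finite.of_injective _ this

instance unitFinite : Finite { u : Pt d // norm1 u = 1 } := by
  classical
  have : Function.Injective (fun (u : { u : Pt d // norm1 u = 1 }) =>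
      (fun i => ⟨u.1 i, by
        rw [Finset.mem_Icc]
        have := coord_le_norm1 u.1 i
        rw [u.2, abs_le] at this
        omega⟩ : ∀ i : Fin d, (Finset.Icc (-1 : ℤ) 1 : Finset ℤ))) := by
    intro u u' h
    apply Subtype.ext
    funext i
    have := congrFun h i
    simpa using this
  exact Finite.of_injective _ this

end Infra

section PieceB

/-- Connected graphs on `[0,b]`, as a finset. -/
def connGraphs (b : ℕ) : Finset (Finset (ℕ × ℕ)) :=
  ((edgeSet 0 b).powerset).filter fun Γ => IsConnGraph 0 b Γ

lemma prod_one_add (E : Finset (ℕ × ℕ)) (u : ℕ × ℕ → ℝ) :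
    ∏ e ∈ E, (1 + u e) = ∑ Γ ∈ E.powerset, ∏ e ∈ Γ, u e := by
  have h : ∀ e ∈ E, (1 + u e) = (u e + 1) := fun _ _ => add_comm _ _
  rw [Finset.prod_congr rfl h, Finset.prod_add]
  simp

/-- The set of cut points (≥ 1) of a graph. -/
def cutSet (Γ : Finset (ℕ × ℕ)) : Set ℕ :=
  {c | 1 ≤ c ∧ ∀ e ∈ Γ, ¬(e.1 < c ∧ c < e.2)}

/-- The first cut point of a graph. -/
def cut (Γ : Finset (ℕ × ℕ)) : ℕ := sInf (cutSet Γ)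

lemma cutSet_top {n : ℕ} (hn : 1 ≤ n) {Γ : Finset (ℕ × ℕ)} (hΓ : Γ ⊆ edgeSet 0 n) :
    n ∈ cutSet Γ := by
  refine ⟨hn, fun e he => ?_⟩
  have := (mem_edgeSet.1 (hΓ he)).2.2
  omega

lemma cut_mem {n : ℕ} (hn : 1 ≤ n) {Γ : Finset (ℕ × ℕ)} (hΓ : Γ ⊆ edgeSet 0 n) :
    cut Γ ∈ cutSet Γ :=
  Nat.sInf_mem ⟨n, cutSet_top hn hΓ⟩

lemma cut_le {n : ℕ} (hn : 1 ≤ n) {Γ : Finset (ℕ × ℕ)} (hΓ : Γ ⊆ edgeSet 0 n) :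
    cut Γ ≤ n :=
  Nat.sInf_le (cutSet_top hn hΓ)

lemma cut_min {Γ : Finset (ℕ × ℕ)} {c : ℕ} (h1 : 1 ≤ c) (h2 : c < cut Γ) :
    ∃ e ∈ Γ, e.1 < c ∧ c < e.2 := by
  by_contra h
  push_neg at h
  have : c ∈ cutSet Γ := ⟨h1, fun e he hc => by
    have := h e he hc.1; omega⟩
  have hle : cut Γ ≤ c := Nat.sInf_le this
  omega

/-- `cut` of a (connected on [0,m]) ∪ (graph on [m,n]) equals `m`. -/
lemma cut_union {m n : ℕ} {Γ₁ Γ₂ : Finset (ℕ × ℕ)} (hm : 1 ≤ m)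
    (h1 : IsConnGraph 0 m Γ₁) (h2 : Γ₂ ⊆ edgeSet m n) :
    cut (Γ₁ ∪ Γ₂) = m := by
  have hmem : m ∈ cutSet (Γ₁ ∪ Γ₂) := by
    refine ⟨hm, fun e he => ?_⟩
    rcases Finset.mem_union.1 he with h | h
    · have := (h1.1 e h).2.2; omega
    · have := (mem_edgeSet.1 (h2 h)).1; omega
  refine le_antisymm (Nat.sInf_le hmem) ?_
  by_contra h
  push_neg at h
  have h3 : cut (Γ₁ ∪ Γ₂) ∈ cutSet (Γ₁ ∪ Γ₂) := Nat.sInf_mem ⟨m, hmem⟩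
  obtain ⟨hc1, hc2⟩ := h3
  obtain ⟨e, he, he1, he2⟩ := h1.2.2.2 (cut (Γ₁ ∪ Γ₂)) (by omega) (by omega)
  exact hc2 e (Finset.mem_union_left _ he) ⟨he1, he2⟩

lemma filter_decomp_conn {n m : ℕ} (hn : 1 ≤ n) {Γ : Finset (ℕ × ℕ)}
    (hΓ : Γ ⊆ edgeSet 0 n) (h0 : ∃ e ∈ Γ, e.1 = 0) (hc : cut Γ = m) :
    IsConnGraph 0 m (Γ.filter fun e => e.2 ≤ m) := by
  have hcm := cut_mem hn hΓ
  rw [hc] at hcm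
  obtain ⟨hm1, hnostrad⟩ := hcm
  obtain ⟨e₀, he₀, he₀1⟩ := h0
  obtain ⟨-, he₀lt, he₀n⟩ := mem_edgeSet.1 (hΓ he₀)
  have he₀2 : e₀.2 ≤ m := by
    by_contra hh
    exact hnostrad e₀ he₀ ⟨by omega, by omega⟩
  refine ⟨?_, ⟨e₀, Finset.mem_filter.2 ⟨he₀, he₀2⟩, he₀1⟩, ?_, ?_⟩
  · intro e he
    obtain ⟨heΓ, he2⟩ := Finset.mem_filter.1 he
    have := mem_edgeSet.1 (hΓ heΓ)
    exact ⟨Nat.zero_le _, this.2.1, he2⟩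
  · rcases Nat.lt_or_ge 1 m with h | h
    · obtain ⟨e, he, hx1, hx2⟩ := cut_min (Γ := Γ) (c := m - 1) (by omega)
        (by rw [hc]; omega)
      have he2m : e.2 ≤ m := by
        by_contra hh
        exact hnostrad e he ⟨by omega, by omega⟩
      have he2 : e.2 = m := by omega
      exact ⟨e, Finset.mem_filter.2 ⟨he, by omega⟩, he2⟩
    · have hm : m = 1 := by omega
      have : e₀.2 = m := by omega
      exact ⟨e₀, Finset.mem_filter.2 ⟨he₀, by omega⟩, this⟩
  · intro c hc1 hc2
    obtain ⟨e, he, hx1, hx2⟩ := cut_min (Γ := Γ) (c := c) (by omega)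
      (by rw [hc]; omega)
    have he2m : e.2 ≤ m := by
      by_contra hh
      exact hnostrad e he ⟨by omega, by omega⟩
    refine ⟨e, Finset.mem_filter.2 ⟨he, by omega⟩, hx1, hx2⟩

lemma conn_edge_fst_lt {a b : ℕ} {Γ : Finset (ℕ × ℕ)} (h : IsConnGraph a b Γ)
    {e : ℕ × ℕ} (he : e ∈ Γ) : e.1 < e.2 := (h.1 e he).2.1

/-- Piece B: the fundamental decomposition of the product over all edges. -/
lemma piece_B (n : ℕ) (hn : 1 ≤ n) (u : ℕ × ℕ → ℝ) :
    ∏ e ∈ edgeSet 0 n, (1 + u e) =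
      (∏ e ∈ edgeSet 1 n, (1 + u e)) +
      ∑ m ∈ Finset.Icc 1 n,
        (∑ Γ ∈ connGraphs m, ∏ e ∈ Γ, u e) * ∏ e ∈ edgeSet m n, (1 + u e) := by
  classical
  rw [prod_one_add]
  rw [← Finset.sum_filter_add_sum_filter_not ((edgeSet 0 n).powerset)
    (fun Γ => ∀ e ∈ Γ, 1 ≤ e.1)]
  congr 1
  · -- graphs avoiding 0
    rw [prod_one_add]
    refine Finset.sum_congr ?_ (fun _ _ => rfl)
    ext Γ
    simp only [Finset.mem_filter, Finset.mem_powerset]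
    constructor
    · rintro ⟨hsub, hall⟩ e he
      obtain ⟨h1, h2, h3⟩ := mem_edgeSet.1 (hsub he)
      exact mem_edgeSet.2 ⟨hall e he, h2, h3⟩
    · intro hsub
      refine ⟨fun e he => ?_, fun e he => (mem_edgeSet.1 (hsub he)).1⟩
      obtain ⟨h1, h2, h3⟩ := mem_edgeSet.1 (hsub he)
      exact mem_edgeSet.2 ⟨Nat.zero_le _, h2, h3⟩
  · -- graphs containing an edge from 0: classify by cut point
    rw [← Finset.sum_fiberwise_of_maps_to (g := cut) (t := Finset.Icc 1 n) ?_ ]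
    · refine Finset.sum_congr rfl fun m hm => ?_
      obtain ⟨hm1, hmn⟩ := Finset.mem_Icc.1 hm
      rw [prod_one_add (edgeSet m n), Finset.sum_mul_sum, ← Finset.sum_product']
      refine Finset.sum_nbij'
        (fun Γ => (Γ.filter fun e => e.2 ≤ m, Γ.filter fun e => m ≤ e.1))
        (fun p => p.1 ∪ p.2) ?_ ?_ ?_ ?_ ?_
      · intro Γ hΓ
        simp only [Finset.mem_filter, Finset.mem_powerset, not_forall] at hΓ
        obtain ⟨⟨hsub, hex⟩, hcut⟩ := hΓ
        have h0 : ∃ e ∈ Γ, e.1 = 0 := by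
          obtain ⟨e, he, hne⟩ := hex
          exact ⟨e, he, by omega⟩
        simp only [Finset.mem_product, connGraphs, Finset.mem_filter,
          Finset.mem_powerset]
        refine ⟨⟨fun e he => ?_, filter_decomp_conn hn hsub h0 hcut⟩, fun e he => ?_⟩
        · obtain ⟨heΓ, he2⟩ := Finset.mem_filter.1 he
          have := mem_edgeSet.1 (hsub heΓ)
          exact mem_edgeSet.2 ⟨Nat.zero_le _, this.2.1, he2⟩
        · obtain ⟨heΓ, he1⟩ := Finset.mem_filter.1 he
          have := mem_edgeSet.1 (hsub heΓ)
          exact mem_edgeSet.2 ⟨he1, this.2.1, this.2.2⟩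
      · rintro ⟨Γ₁, Γ₂⟩ hp
        simp only [Finset.mem_product, connGraphs, Finset.mem_filter,
          Finset.mem_powerset] at hp
        obtain ⟨⟨hsub1, hconn⟩, hsub2⟩ := hp
        simp only [Finset.mem_filter, Finset.mem_powerset, not_forall]
        obtain ⟨e₀, he₀, he₀1⟩ := hconn.2.1
        refine ⟨⟨fun e he => ?_, ⟨e₀, Finset.mem_union_left _ he₀, by omega⟩⟩,
          cut_union hm1 hconn hsub2⟩
        rcases Finset.mem_union.1 he with h | h
        · obtain ⟨h1, h2, h3⟩ := hconn.1 e h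
          exact mem_edgeSet.2 ⟨Nat.zero_le _, h2, by omega⟩
        · obtain ⟨h1, h2, h3⟩ := mem_edgeSet.1 (hsub2 h)
          exact mem_edgeSet.2 ⟨Nat.zero_le _, h2, h3⟩
      · intro Γ hΓ
        simp only [Finset.mem_filter, Finset.mem_powerset, not_forall] at hΓ
        obtain ⟨⟨hsub, _⟩, hcut⟩ := hΓ
        have hcm := cut_mem hn hsub
        rw [hcut] at hcm
        ext e
        simp only [Finset.mem_union, Finset.mem_filter]
        constructor
        · rintro (⟨h, _⟩ | ⟨h, _⟩) <;> exact h
        · intro he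
          have h1 := hcm.2 e he
          have h2 := (mem_edgeSet.1 (hsub he)).2.1
          rcases Nat.lt_or_ge e.1 m with h | h
          · left; exact ⟨he, by omega⟩
          · right; exact ⟨he, h⟩
      · rintro ⟨Γ₁, Γ₂⟩ hp
        simp only [Finset.mem_product, connGraphs, Finset.mem_filter,
          Finset.mem_powerset] at hp
        obtain ⟨⟨hsub1, hconn⟩, hsub2⟩ := hp
        have key1 : ∀ e ∈ Γ₁, e.2 ≤ m ∧ ¬ m ≤ e.1 := by
          intro e he
          obtain ⟨h1, h2, h3⟩ := hconn.1 e he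
          omega
        have key2 : ∀ e ∈ Γ₂, m ≤ e.1 ∧ ¬ e.2 ≤ m := by
          intro e he
          obtain ⟨h1, h2, h3⟩ := mem_edgeSet.1 (hsub2 he)
          omega
        show ((Γ₁ ∪ Γ₂).filter (fun e => e.2 ≤ m),
          (Γ₁ ∪ Γ₂).filter (fun e => m ≤ e.1)) = (Γ₁, Γ₂)
        have : (Γ₁ ∪ Γ₂).filter (fun e => e.2 ≤ m) = Γ₁ := by
          ext e
          simp only [Finset.mem_filter, Finset.mem_union]
          constructor
          · rintro ⟨h | h, h2⟩
            · exact h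
            · exact absurd h2 (key2 e h).2
          · intro h; exact ⟨Or.inl h, (key1 e h).1⟩
        rw [this]
        have : (Γ₁ ∪ Γ₂).filter (fun e => m ≤ e.1) = Γ₂ := by
          ext e
          simp only [Finset.mem_filter, Finset.mem_union]
          constructor
          · rintro ⟨h | h, h2⟩
            · exact absurd h2 (key1 e h).2
            · exact h
          · intro h; exact ⟨Or.inr h, (key2 e h).1⟩
        rw [this]
      · intro Γ hΓ
        simp only [Finset.mem_filter, Finset.mem_powerset, not_forall] at hΓ
        obtain ⟨⟨hsub, _⟩, hcut⟩ := hΓ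
        have hcm := cut_mem hn hsub
        rw [hcut] at hcm
        have hdisj : ∀ e ∈ Γ, (e.2 ≤ m ↔ ¬ m ≤ e.1) := by
          intro e he
          have h1 := hcm.2 e he
          have h2 := (mem_edgeSet.1 (hsub he)).2.1
          omega
        have : Γ.filter (fun e => m ≤ e.1) = Γ.filter (fun e => ¬ e.2 ≤ m) := by
          ext e
          simp only [Finset.mem_filter]
          constructor
          · rintro ⟨he, h⟩; exact ⟨he, by rw [hdisj e he]; omega⟩
          · rintro ⟨he, h⟩; refine ⟨he, ?_⟩
            have := hdisj e he; omega
        simp only [this]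
        exact (Finset.prod_filter_mul_prod_filter_not Γ _ _).symm
    · intro Γ hΓ
      simp only [Finset.mem_filter, Finset.mem_powerset] at hΓ
      rw [Finset.mem_Icc]
      have hcm := cut_mem hn hΓ.1
      exact ⟨hcm.1, cut_le hn hΓ.1⟩

end PieceB

section LaceStruct
variable {b : ℕ} {Γ L : Finset (ℕ × ℕ)}

lemma tSeq_zero_def : tSeq 0 Γ 0 = (Γ.filter fun e => e.1 = 0).sup Prod.snd := rfl

lemma tSeq_succ_def (i : ℕ) :
    tSeq 0 Γ (i + 1) = (Γ.filter fun e => e.1 < tSeq 0 Γ i).sup Prod.snd := rfl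

lemma sOf_spec_mem {t : ℕ} (h : ∃ s, (s, t) ∈ Γ) : (sOf Γ t, t) ∈ Γ :=
  Nat.sInf_mem h

lemma sOf_le {s t : ℕ} (h : (s, t) ∈ Γ) : sOf Γ t ≤ s := Nat.sInf_le h

lemma conn_superset {a b : ℕ} {Γ₁ Γ₂ : Finset (ℕ × ℕ)} (hsub : Γ₁ ⊆ Γ₂)
    (h1 : IsConnGraph a b Γ₁) (h2 : ∀ e ∈ Γ₂, IsEdgeOn a b e) : IsConnGraph a b Γ₂ := by
  obtain ⟨_, ⟨e1, he1, h01⟩, ⟨e2, he2, h02⟩, hcov⟩ := h1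
  exact ⟨h2, ⟨e1, hsub he1, h01⟩, ⟨e2, hsub he2, h02⟩,
    fun c hc1 hc2 => ((hcov c hc1 hc2).imp fun e he => ⟨hsub he.1, he.2⟩)⟩

lemma seq_struct (hΓ : IsConnGraph 0 b Γ) :
    ∀ i, (sOf Γ (tSeq 0 Γ i), tSeq 0 Γ i) ∈ Γ ∧
      (∀ j, i = j + 1 → sOf Γ (tSeq 0 Γ i) < tSeq 0 Γ j) ∧
      (i = 0 → sOf Γ (tSeq 0 Γ i) = 0) := by
  intro i
  induction i with
  | zero =>
    obtain ⟨e, he, he0⟩ := hΓ.2.1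
    have hne : (Γ.filter fun e => e.1 = 0).Nonempty :=
      ⟨e, Finset.mem_filter.2 ⟨he, he0⟩⟩
    obtain ⟨f, hf, hfs⟩ := Finset.exists_mem_eq_sup _ hne Prod.snd
    obtain ⟨hfΓ, hf0⟩ := Finset.mem_filter.1 hf
    have hmem : (0, tSeq 0 Γ 0) ∈ Γ := by
      rw [tSeq_zero_def, hfs, ← hf0]
      simpa using hfΓ
    have hs : (sOf Γ (tSeq 0 Γ 0), tSeq 0 Γ 0) ∈ Γ := sOf_spec_mem ⟨0, hmem⟩
    refine ⟨hs, fun j hj => by omega, fun _ => ?_⟩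
    exact Nat.le_antisymm (sOf_le hmem) (Nat.zero_le _)
  | succ i ih =>
    have hprev := ih.1
    have hlt : sOf Γ (tSeq 0 Γ i) < tSeq 0 Γ i := (hΓ.1 _ hprev).2.1
    have hne : (Γ.filter fun e => e.1 < tSeq 0 Γ i).Nonempty :=
      ⟨_, Finset.mem_filter.2 ⟨hprev, hlt⟩⟩
    obtain ⟨f, hf, hfs⟩ := Finset.exists_mem_eq_sup _ hne Prod.snd
    obtain ⟨hfΓ, hf1⟩ := Finset.mem_filter.1 hf
    have hmem : (f.1, tSeq 0 Γ (i + 1)) ∈ Γ := by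
      rw [tSeq_succ_def, hfs]
      simpa using hfΓ
    have hs : (sOf Γ (tSeq 0 Γ (i + 1)), tSeq 0 Γ (i + 1)) ∈ Γ := sOf_spec_mem ⟨f.1, hmem⟩
    refine ⟨hs, fun j hj => ?_, fun h => by omega⟩
    have hle : sOf Γ (tSeq 0 Γ (i + 1)) ≤ f.1 := sOf_le hmem
    have hji : j = i := by omega
    subst hji
    omega

lemma edge_mem (hΓ : IsConnGraph 0 b Γ) (i : ℕ) :
    (sOf Γ (tSeq 0 Γ i), tSeq 0 Γ i) ∈ Γ := (seq_struct hΓ i).1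

lemma s_lt_prev (hΓ : IsConnGraph 0 b Γ) (i : ℕ) :
    sOf Γ (tSeq 0 Γ (i + 1)) < tSeq 0 Γ i := (seq_struct hΓ (i + 1)).2.1 i rfl

lemma s_zero (hΓ : IsConnGraph 0 b Γ) : sOf Γ (tSeq 0 Γ 0) = 0 :=
  (seq_struct hΓ 0).2.2 rfl

lemma s_lt_t (hΓ : IsConnGraph 0 b Γ) (i : ℕ) :
    sOf Γ (tSeq 0 Γ i) < tSeq 0 Γ i := (hΓ.1 _ (edge_mem hΓ i)).2.1

lemma t_pos (hΓ : IsConnGraph 0 b Γ) (i : ℕ) : 1 ≤ tSeq 0 Γ i := by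
  have := s_lt_t hΓ i; omega

lemma t_le_b (hΓ : IsConnGraph 0 b Γ) (i : ℕ) : tSeq 0 Γ i ≤ b := by
  cases i with
  | zero =>
    rw [tSeq_zero_def]
    exact Finset.sup_le fun e he => (hΓ.1 e (Finset.mem_filter.1 he).1).2.2
  | succ i =>
    rw [tSeq_succ_def]
    exact Finset.sup_le fun e he => (hΓ.1 e (Finset.mem_filter.1 he).1).2.2

lemma snd_le_t0 (hΓ : IsConnGraph 0 b Γ) {e : ℕ × ℕ} (he : e ∈ Γ) (h0 : e.1 = 0) :
    e.2 ≤ tSeq 0 Γ 0 := by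
  rw [tSeq_zero_def]
  exact Finset.le_sup (Finset.mem_filter.2 ⟨he, h0⟩)

lemma snd_le_tsucc (hΓ : IsConnGraph 0 b Γ) {e : ℕ × ℕ} {i : ℕ} (he : e ∈ Γ)
    (h0 : e.1 < tSeq 0 Γ i) : e.2 ≤ tSeq 0 Γ (i + 1) := by
  rw [tSeq_succ_def]
  exact Finset.le_sup (Finset.mem_filter.2 ⟨he, h0⟩)

lemma t_le_succ (hΓ : IsConnGraph 0 b Γ) (i : ℕ) : tSeq 0 Γ i ≤ tSeq 0 Γ (i + 1) :=
  snd_le_tsucc hΓ (edge_mem hΓ i) (s_lt_t hΓ i)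

lemma t_mono (hΓ : IsConnGraph 0 b Γ) {i j : ℕ} (h : i ≤ j) :
    tSeq 0 Γ i ≤ tSeq 0 Γ j := by
  induction j with
  | zero =>
    have hi : i = 0 := by omega
    subst hi; exact le_rfl
  | succ k ih =>
    rcases Nat.lt_or_ge i (k + 1) with h2 | h2
    · exact le_trans (ih (by omega)) (t_le_succ hΓ k)
    · have hik : i = k + 1 := by omega
      subst hik; exact le_rfl

lemma t_lt_succ (hΓ : IsConnGraph 0 b Γ) (i : ℕ) (h : tSeq 0 Γ i < b) :
    tSeq 0 Γ i < tSeq 0 Γ (i + 1) := by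
  obtain ⟨e, he, he1, he2⟩ := hΓ.2.2.2 (tSeq 0 Γ i) (t_pos hΓ i) h
  exact lt_of_lt_of_le he2 (snd_le_tsucc hΓ he he1)

lemma s_interleave (hΓ : IsConnGraph 0 b Γ) (i : ℕ) (h : tSeq 0 Γ (i + 1) < b) :
    tSeq 0 Γ i ≤ sOf Γ (tSeq 0 Γ (i + 2)) := by
  by_contra hc
  push_neg at hc
  have h1 : tSeq 0 Γ (i + 2) ≤ tSeq 0 Γ (i + 1) :=
    snd_le_tsucc hΓ (edge_mem hΓ (i + 2)) hc
  have h2 : tSeq 0 Γ (i + 1) < tSeq 0 Γ (i + 2) := t_lt_succ hΓ (i + 1) h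
  omega

lemma exists_tSeq_eq_b (hΓ : IsConnGraph 0 b Γ) : ∃ i ≤ Γ.card, tSeq 0 Γ i = b := by
  by_contra h
  push_neg at h
  have hlt : ∀ i ≤ Γ.card, tSeq 0 Γ i < b := fun i hi =>
    lt_of_le_of_ne (t_le_b hΓ i) (h i hi)
  have hmono : ∀ j ≤ Γ.card, ∀ i < j, tSeq 0 Γ i < tSeq 0 Γ j := by
    intro j
    induction j with
    | zero => intro _ i hi; omega
    | succ k ih =>
      intro hj i hi
      have h1 : tSeq 0 Γ k < tSeq 0 Γ (k + 1) := t_lt_succ hΓ k (hlt k (by omega))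
      rcases Nat.lt_or_ge i k with h2 | h2
      · exact lt_trans (ih (by omega) i h2) h1
      · have : i = k := by omega
        subst this; exact h1
  have hinj : Set.InjOn (fun i => (sOf Γ (tSeq 0 Γ i), tSeq 0 Γ i))
      (Finset.range (Γ.card + 1)) := by
    intro i hi j hj hij
    simp only [Finset.coe_range, Set.mem_Iio] at hi hj
    by_contra hne
    have hsnd : tSeq 0 Γ i = tSeq 0 Γ j := congrArg Prod.snd hij
    rcases Nat.lt_or_ge i j with h2 | h2
    · have := hmono j (by omega) i h2; omega
    · have := hmono i (by omega) j (by omega); omega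
  have hcard := Finset.card_le_card_of_injOn _
    (fun i _ => edge_mem hΓ i) hinj
  simp only [Finset.card_range] at hcard
  omega

/-- The number of steps in the lace construction before the sequence hits `b`. -/
noncomputable def rhoIdx (b : ℕ) (Γ : Finset (ℕ × ℕ)) : ℕ := sInf {i | tSeq 0 Γ i = b}

lemma t_rho (hΓ : IsConnGraph 0 b Γ) : tSeq 0 Γ (rhoIdx b Γ) = b := by
  obtain ⟨i, _, hib⟩ := exists_tSeq_eq_b hΓ
  have hne : {j | tSeq 0 Γ j = b}.Nonempty := ⟨i, hib⟩
  exact Nat.sInf_mem hne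

lemma rho_le_card (hΓ : IsConnGraph 0 b Γ) : rhoIdx b Γ ≤ Γ.card := by
  obtain ⟨i, hi, hib⟩ := exists_tSeq_eq_b hΓ
  exact le_trans (Nat.sInf_le (show i ∈ {j | tSeq 0 Γ j = b} from hib)) hi

lemma t_lt_b_of_lt_rho (hΓ : IsConnGraph 0 b Γ) {i : ℕ} (h : i < rhoIdx b Γ) :
    tSeq 0 Γ i < b := by
  refine lt_of_le_of_ne (t_le_b hΓ i) fun hc => ?_
  have : rhoIdx b Γ ≤ i := Nat.sInf_le (show i ∈ {j | tSeq 0 Γ j = b} from hc)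
  omega

lemma t_eq_b_of_ge_rho (hΓ : IsConnGraph 0 b Γ) {i : ℕ} (h : rhoIdx b Γ ≤ i) :
    tSeq 0 Γ i = b := by
  induction i with
  | zero =>
    have h0 : rhoIdx b Γ = 0 := by omega
    exact h0 ▸ t_rho hΓ
  | succ k ih =>
    rcases Nat.lt_or_ge k (rhoIdx b Γ) with h2 | h2
    · have h0 : rhoIdx b Γ = k + 1 := by omega
      exact h0 ▸ t_rho hΓ
    · have hk := ih h2
      have := t_le_succ hΓ k
      have := t_le_b hΓ (k + 1)
      omega

lemma t_strict (hΓ : IsConnGraph 0 b Γ) {i j : ℕ} (hij : i < j) (hj : j ≤ rhoIdx b Γ) :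
    tSeq 0 Γ i < tSeq 0 Γ j := by
  induction j with
  | zero => omega
  | succ k ih =>
    have h1 : tSeq 0 Γ k < tSeq 0 Γ (k + 1) :=
      t_lt_succ hΓ k (t_lt_b_of_lt_rho hΓ (by omega))
    rcases Nat.lt_or_ge i k with h2 | h2
    · exact lt_trans (ih h2 (by omega)) h1
    · have : i = k := by omega
      subst this; exact h1

lemma t_inj (hΓ : IsConnGraph 0 b Γ) {i j : ℕ} (hi : i ≤ rhoIdx b Γ)
    (hj : j ≤ rhoIdx b Γ) (h : tSeq 0 Γ i = tSeq 0 Γ j) : i = j := by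
  rcases Nat.lt_trichotomy i j with h2 | h2 | h2
  · have := t_strict hΓ h2 hj; omega
  · exact h2
  · have := t_strict hΓ h2 hi; omega

lemma s_ge_one (hΓ : IsConnGraph 0 b Γ) {i : ℕ} (h1 : 1 ≤ i) (h2 : i ≤ rhoIdx b Γ) :
    1 ≤ sOf Γ (tSeq 0 Γ i) := by
  rcases Nat.lt_or_ge i 2 with h3 | h3
  · have hi1 : i = 1 := by omega
    subst hi1
    by_contra hc
    push_neg at hc
    have hs0 : sOf Γ (tSeq 0 Γ 1) = 0 := by omega
    have hmem : ((0 : ℕ), tSeq 0 Γ 1) ∈ Γ := by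
      have := edge_mem hΓ 1
      rwa [hs0] at this
    have hle : tSeq 0 Γ 1 ≤ tSeq 0 Γ 0 := snd_le_t0 hΓ hmem rfl
    have := t_strict hΓ (show 0 < 1 by omega) h2
    omega
  · obtain ⟨l, rfl⟩ : ∃ l, i = l + 2 := ⟨i - 2, by omega⟩
    have hint := s_interleave hΓ l (t_lt_b_of_lt_rho hΓ (by omega))
    have := t_pos hΓ l
    omega

lemma laceOf_eq_image (hΓ : IsConnGraph 0 b Γ) :
    laceOf 0 Γ = (Finset.range (rhoIdx b Γ + 1)).image
      (fun i => (sOf Γ (tSeq 0 Γ i), tSeq 0 Γ i)) := by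
  unfold laceOf
  apply Finset.Subset.antisymm
  · intro e he
    obtain ⟨i, hi, hie⟩ := Finset.mem_image.1 he
    rcases le_or_gt i (rhoIdx b Γ) with h | h
    · exact Finset.mem_image.2 ⟨i, Finset.mem_range.2 (by omega), hie⟩
    · have h1 : tSeq 0 Γ i = b := t_eq_b_of_ge_rho hΓ (by omega)
      have h2 : tSeq 0 Γ (rhoIdx b Γ) = b := t_rho hΓ
      refine Finset.mem_image.2 ⟨rhoIdx b Γ, Finset.mem_range.2 (by omega), ?_⟩
      rw [← hie, h1, h2]
  · intro e he
    obtain ⟨i, hi, hie⟩ := Finset.mem_image.1 he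
    have hirho : i < rhoIdx b Γ + 1 := Finset.mem_range.1 hi
    have hle : i ≤ Γ.card := le_trans (by omega) (rho_le_card hΓ)
    exact Finset.mem_image.2 ⟨i, Finset.mem_range.2 (by omega), hie⟩

lemma mem_laceOf (hΓ : IsConnGraph 0 b Γ) {e : ℕ × ℕ} :
    e ∈ laceOf 0 Γ ↔ ∃ i ≤ rhoIdx b Γ, e = (sOf Γ (tSeq 0 Γ i), tSeq 0 Γ i) := by
  rw [laceOf_eq_image hΓ]
  simp only [Finset.mem_image, Finset.mem_range]
  constructor
  · rintro ⟨i, hi, hie⟩; exact ⟨i, by omega, hie.symm⟩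
  · rintro ⟨i, hi, hie⟩; exact ⟨i, by omega, hie.symm⟩

lemma laceOf_subset (hΓ : IsConnGraph 0 b Γ) : laceOf 0 Γ ⊆ Γ := by
  intro e he
  obtain ⟨i, _, hie⟩ := (mem_laceOf hΓ).1 he
  rw [hie]; exact edge_mem hΓ i

lemma laceOf_conn (hΓ : IsConnGraph 0 b Γ) : IsConnGraph 0 b (laceOf 0 Γ) := by
  refine ⟨fun e he => hΓ.1 e (laceOf_subset hΓ he), ?_, ?_, ?_⟩
  · exact ⟨_, (mem_laceOf hΓ).2 ⟨0, Nat.zero_le _, rfl⟩, s_zero hΓ⟩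
  · exact ⟨_, (mem_laceOf hΓ).2 ⟨rhoIdx b Γ, le_rfl, rfl⟩, t_rho hΓ⟩
  · intro c hc1 hc2
    have hne : {i | c < tSeq 0 Γ i}.Nonempty :=
      ⟨rhoIdx b Γ, by simpa [t_rho hΓ] using hc2⟩
    obtain ⟨i, hci, hmin⟩ : ∃ i, c < tSeq 0 Γ i ∧ ∀ j < i, ¬c < tSeq 0 Γ j :=
      ⟨sInf {i | c < tSeq 0 Γ i}, Nat.sInf_mem hne, fun j hj hcj => by
        have := Nat.sInf_le (s := {i | c < tSeq 0 Γ i}) hcj; omega⟩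
    have hile : i ≤ rhoIdx b Γ := by
      by_contra hgt
      exact hmin (rhoIdx b Γ) (by omega) (by rw [t_rho hΓ]; exact hc2)
    cases i with
    | zero =>
      refine ⟨_, (mem_laceOf hΓ).2 ⟨0, Nat.zero_le _, rfl⟩, ?_, hci⟩
      rw [s_zero hΓ]; exact hc1
    | succ j =>
      refine ⟨_, (mem_laceOf hΓ).2 ⟨j + 1, hile, rfl⟩, ?_, hci⟩
      have h1 := s_lt_prev hΓ j
      have h2 : ¬c < tSeq 0 Γ j := hmin j (by omega)
      show sOf Γ (tSeq 0 Γ (j + 1)) < c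
      omega

lemma laceOf_isLace (hΓ : IsConnGraph 0 b Γ) : IsLace 0 b (laceOf 0 Γ) := by
  refine ⟨laceOf_conn hΓ, ?_⟩
  intro e he hconn'
  obtain ⟨i, hirho, hie⟩ := (mem_laceOf hΓ).1 he
  have hmem_erase : ∀ f ∈ (laceOf 0 Γ).erase e,
      ∃ j ≤ rhoIdx b Γ, j ≠ i ∧ f = (sOf Γ (tSeq 0 Γ j), tSeq 0 Γ j) := by
    intro f hf
    obtain ⟨hfe, hfL⟩ := Finset.mem_erase.1 hf
    obtain ⟨j, hjrho, hjf⟩ := (mem_laceOf hΓ).1 hfL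
    refine ⟨j, hjrho, ?_, hjf⟩
    rintro rfl
    exact hfe (by rw [hjf, ← hie])
  rcases Nat.eq_zero_or_pos i with hi0 | hipos
  · subst hi0
    obtain ⟨f, hf, hf0⟩ := hconn'.2.1
    obtain ⟨j, hjrho, hjne, hjf⟩ := hmem_erase f hf
    have hj0 : sOf Γ (tSeq 0 Γ j) = 0 := by rw [hjf] at hf0; exact hf0
    have := s_ge_one hΓ (by omega) hjrho
    omega
  · rcases Nat.lt_or_ge i (rhoIdx b Γ) with hlt | hge
    · obtain ⟨k, rfl⟩ : ∃ k, i = k + 1 := ⟨i - 1, by omega⟩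
      have hc1 : 0 < tSeq 0 Γ k := t_pos hΓ k
      have hc2 : tSeq 0 Γ k < b := t_lt_b_of_lt_rho hΓ (by omega)
      obtain ⟨f, hf, hfc1, hfc2⟩ := hconn'.2.2.2 (tSeq 0 Γ k) hc1 hc2
      obtain ⟨j, hjrho, hjne, hjf⟩ := hmem_erase f hf
      rw [hjf] at hfc1 hfc2
      simp only at hfc1 hfc2
      rcases Nat.lt_or_ge j (k + 1) with h | h
      · have : tSeq 0 Γ j ≤ tSeq 0 Γ k := t_mono hΓ (by omega)
        omega
      · obtain ⟨l, rfl⟩ : ∃ l, j = l + 2 := ⟨j - 2, by omega⟩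
        have h1 : tSeq 0 Γ l ≤ sOf Γ (tSeq 0 Γ (l + 2)) :=
          s_interleave hΓ l (t_lt_b_of_lt_rho hΓ (by omega))
        have h2 : tSeq 0 Γ k ≤ tSeq 0 Γ l := t_mono hΓ (by omega)
        omega
    · have hieq : i = rhoIdx b Γ := by omega
      obtain ⟨f, hf, hfb⟩ := hconn'.2.2.1
      obtain ⟨j, hjrho, hjne, hjf⟩ := hmem_erase f hf
      have hjb : tSeq 0 Γ j = b := by rw [hjf] at hfb; exact hfb
      have : tSeq 0 Γ j < b := t_lt_b_of_lt_rho hΓ (by omega)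
      omega

end LaceStruct

section LaceChar
variable {b : ℕ} {Γ L : Finset (ℕ × ℕ)}

lemma sOf_laceOf (hΓ : IsConnGraph 0 b Γ) {i : ℕ} (hi : i ≤ rhoIdx b Γ) :
    sOf (laceOf 0 Γ) (tSeq 0 Γ i) = sOf Γ (tSeq 0 Γ i) := by
  have hmem : (sOf Γ (tSeq 0 Γ i), tSeq 0 Γ i) ∈ laceOf 0 Γ :=
    (mem_laceOf hΓ).2 ⟨i, hi, rfl⟩
  apply le_antisymm
  · exact Nat.sInf_le (show sOf Γ (tSeq 0 Γ i) ∈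
      {s | (s, tSeq 0 Γ i) ∈ laceOf 0 Γ} from hmem)
  · refine le_csInf ⟨_, hmem⟩ fun x hx => ?_
    obtain ⟨j, hj, hje⟩ := (mem_laceOf hΓ).1 (show (x, tSeq 0 Γ i) ∈ laceOf 0 Γ from hx)
    have hsnd : tSeq 0 Γ i = tSeq 0 Γ j := congrArg Prod.snd hje
    have hij := t_inj hΓ hi hj hsnd
    have hfst : x = sOf Γ (tSeq 0 Γ j) := congrArg Prod.fst hje
    rw [hfst, ← hij]

lemma tSeq_laceOf (hΓ : IsConnGraph 0 b Γ) : ∀ i, tSeq 0 (laceOf 0 Γ) i = tSeq 0 Γ i := by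
  intro i
  induction i with
  | zero =>
    apply le_antisymm
    · rw [tSeq_zero_def]
      refine Finset.sup_le fun e he => ?_
      obtain ⟨heL, he0⟩ := Finset.mem_filter.1 he
      obtain ⟨j, hj, hje⟩ := (mem_laceOf hΓ).1 heL
      have hfst : e.1 = sOf Γ (tSeq 0 Γ j) := congrArg Prod.fst hje
      have hsnd : e.2 = tSeq 0 Γ j := congrArg Prod.snd hje
      have hj0 : j = 0 := by
        by_contra hne
        have := s_ge_one hΓ (by omega) hj
        omega
      subst hj0
      omega
    · have hmem : ((0 : ℕ), tSeq 0 Γ 0) ∈ laceOf 0 Γ := by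
        have := (mem_laceOf hΓ).2 ⟨0, Nat.zero_le _, rfl⟩
        rwa [s_zero hΓ] at this
      exact snd_le_t0 (laceOf_conn hΓ) hmem rfl
  | succ i ih =>
    rw [tSeq_succ_def, ih]
    rcases Nat.lt_or_ge i (rhoIdx b Γ) with hlt | hge
    · apply le_antisymm
      · refine Finset.sup_le fun e he => ?_
        obtain ⟨heL, he1⟩ := Finset.mem_filter.1 he
        obtain ⟨j, hj, hje⟩ := (mem_laceOf hΓ).1 heL
        have hfst : e.1 = sOf Γ (tSeq 0 Γ j) := congrArg Prod.fst hje
        have hsnd : e.2 = tSeq 0 Γ j := congrArg Prod.snd hje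
        rcases Nat.lt_or_ge j (i + 2) with h | h
        · have : tSeq 0 Γ j ≤ tSeq 0 Γ (i + 1) := t_mono hΓ (by omega)
          omega
        · obtain ⟨l, rfl⟩ : ∃ l, j = l + 2 := ⟨j - 2, by omega⟩
          have h1 : tSeq 0 Γ l ≤ sOf Γ (tSeq 0 Γ (l + 2)) :=
            s_interleave hΓ l (t_lt_b_of_lt_rho hΓ (by omega))
          have h2 : tSeq 0 Γ i ≤ tSeq 0 Γ l := t_mono hΓ (by omega)
          omega
      · have hmem : (sOf Γ (tSeq 0 Γ (i + 1)), tSeq 0 Γ (i + 1)) ∈ laceOf 0 Γ :=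
          (mem_laceOf hΓ).2 ⟨i + 1, by omega, rfl⟩
        exact Finset.le_sup (f := Prod.snd)
          (Finset.mem_filter.2 ⟨hmem, s_lt_prev hΓ i⟩)
    · have hb1 : tSeq 0 Γ i = b := t_eq_b_of_ge_rho hΓ hge
      have hb2 : tSeq 0 Γ (i + 1) = b := t_eq_b_of_ge_rho hΓ (by omega)
      apply le_antisymm
      · refine Finset.sup_le fun e he => ?_
        obtain ⟨heL, _⟩ := Finset.mem_filter.1 he
        obtain ⟨_, _, h3⟩ := (laceOf_conn hΓ).1 e heL
        omega
      · have hmem : (sOf Γ (tSeq 0 Γ (rhoIdx b Γ)), tSeq 0 Γ (rhoIdx b Γ)) ∈ laceOf 0 Γ :=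
          (mem_laceOf hΓ).2 ⟨rhoIdx b Γ, le_rfl, rfl⟩
        have hslt := s_lt_t hΓ (rhoIdx b Γ)
        have htr := t_rho hΓ
        have h1 : sOf Γ (tSeq 0 Γ (rhoIdx b Γ)) < tSeq 0 Γ i := by omega
        have hle := Finset.le_sup (f := Prod.snd)
          (s := (laceOf 0 Γ).filter fun e => e.1 < tSeq 0 Γ i)
          (Finset.mem_filter.2 ⟨hmem, h1⟩)
        simp only at hle
        omega

lemma lace_laceOf_self (hL : IsLace 0 b L) : laceOf 0 L = L := by
  by_contra hne
  have hsub := laceOf_subset hL.1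
  have hss : laceOf 0 L ⊂ L := hsub.ssubset_of_ne hne
  obtain ⟨e, heL, heN⟩ := Finset.exists_of_ssubset hss
  have hsub2 : laceOf 0 L ⊆ L.erase e := Finset.subset_erase.2 ⟨hsub, heN⟩
  have hconn : IsConnGraph 0 b (L.erase e) :=
    conn_superset hsub2 (laceOf_conn hL.1) fun f hf => hL.1.1 f (Finset.mem_erase.1 hf).2
  exact hL.2 e heL hconn

/-- The compatibility conditions of an edge w.r.t. a lace. -/
def Cbd (L : Finset (ℕ × ℕ)) (e : ℕ × ℕ) : Prop :=
  (e.1 = 0 → e.2 ≤ tSeq 0 L 0) ∧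
  (∀ i, e.1 < tSeq 0 L i → e.2 ≤ tSeq 0 L (i + 1)) ∧
  (∀ i, e.2 = tSeq 0 L i → sOf L (tSeq 0 L i) ≤ e.1)

lemma laceOf_cbd (hΓ : IsConnGraph 0 b Γ) {e : ℕ × ℕ} (he : e ∈ Γ) :
    Cbd (laceOf 0 Γ) e := by
  refine ⟨fun h0 => ?_, fun i hi => ?_, fun i hi => ?_⟩
  · rw [tSeq_laceOf hΓ]
    exact snd_le_t0 hΓ he h0
  · rw [tSeq_laceOf hΓ] at hi ⊢
    exact snd_le_tsucc hΓ he hi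
  · rw [tSeq_laceOf hΓ] at hi ⊢
    rcases le_or_gt i (rhoIdx b Γ) with h | h
    · rw [sOf_laceOf hΓ h]
      refine Nat.sInf_le (show e.1 ∈ {s | (s, tSeq 0 Γ i) ∈ Γ} from ?_)
      rw [← hi]
      simpa using he
    · have h1 : tSeq 0 Γ i = tSeq 0 Γ (rhoIdx b Γ) := by
        rw [t_rho hΓ, t_eq_b_of_ge_rho hΓ (by omega)]
      rw [h1] at hi ⊢
      rw [sOf_laceOf hΓ le_rfl]
      refine Nat.sInf_le (show e.1 ∈ {s | (s, tSeq 0 Γ (rhoIdx b Γ)) ∈ Γ} from ?_)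
      rw [← hi]
      simpa using he

lemma cbd_laceOf_eq (hΓ : IsConnGraph 0 b Γ) (hL : IsLace 0 b L) (hsub : L ⊆ Γ)
    (hcbd : ∀ e ∈ Γ, Cbd L e) : laceOf 0 Γ = L := by
  have hLc : IsConnGraph 0 b L := hL.1
  have hts : ∀ i, tSeq 0 Γ i = tSeq 0 L i := by
    intro i
    induction i with
    | zero =>
      apply le_antisymm
      · rw [tSeq_zero_def (Γ := Γ)]
        exact Finset.sup_le fun e he => by
          obtain ⟨heΓ, he0⟩ := Finset.mem_filter.1 he
          exact (hcbd e heΓ).1 he0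
      · have hmem : ((0 : ℕ), tSeq 0 L 0) ∈ Γ := by
          have := edge_mem hLc 0
          rw [s_zero hLc] at this
          exact hsub this
        exact snd_le_t0 hΓ hmem rfl
    | succ i ih =>
      apply le_antisymm
      · rw [tSeq_succ_def (Γ := Γ)]
        refine Finset.sup_le fun e he => ?_
        obtain ⟨heΓ, he1⟩ := Finset.mem_filter.1 he
        rw [ih] at he1
        exact (hcbd e heΓ).2.1 i he1
      · have hmem := hsub (edge_mem hLc (i + 1))
        have hlt : sOf L (tSeq 0 L (i + 1)) < tSeq 0 Γ i := by
          rw [ih]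
          exact s_lt_prev hLc i
        exact snd_le_tsucc hΓ hmem hlt
  have hss : ∀ i, sOf Γ (tSeq 0 Γ i) = sOf L (tSeq 0 L i) := by
    intro i
    rw [hts i]
    apply le_antisymm
    · exact Nat.sInf_le (show sOf L (tSeq 0 L i) ∈ {s | (s, tSeq 0 L i) ∈ Γ} from
        hsub (edge_mem hLc i))
    · refine le_csInf ⟨_, hsub (edge_mem hLc i)⟩ fun x hx => ?_
      exact (hcbd (x, tSeq 0 L i) hx).2.2 i rfl
  have hrho : rhoIdx b Γ = rhoIdx b L := by
    unfold rhoIdx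
    congr 1
    ext i
    simp only [Set.mem_setOf_eq, hts i]
  rw [laceOf_eq_image hΓ, hrho]
  conv_rhs => rw [← lace_laceOf_self hL, laceOf_eq_image hLc]
  refine Finset.image_congr fun i _ => ?_
  rw [hss i, hts i]

lemma edgeSet_subset_product {a b : ℕ} :
    edgeSet a b ⊆ Finset.range (b + 1) ×ˢ Finset.range (b + 1) :=
  Finset.filter_subset _ _

lemma mem_compat_iff (hL : IsLace 0 b L) {e : ℕ × ℕ} :
    e ∈ compat 0 b L ↔ IsEdgeOn 0 b e ∧ e ∉ L ∧ Cbd L e := by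
  have hLc := hL.1
  have hconn : ∀ f : ℕ × ℕ, IsEdgeOn 0 b f → IsConnGraph 0 b (insert f L) := by
    intro f hf
    refine conn_superset (Finset.subset_insert f L) hLc fun g hg => ?_
    rcases Finset.mem_insert.1 hg with rfl | hg
    · exact hf
    · exact hLc.1 g hg
  constructor
  · intro h
    have hm := Finset.mem_filter.1 h
    obtain ⟨hedge, hnot, hlace⟩ := hm.2
    refine ⟨hedge, hnot, ?_⟩
    have := laceOf_cbd (hconn e hedge) (Finset.mem_insert_self e L)
    rwa [hlace] at this
  · rintro ⟨hedge, hnot, hcbd⟩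
    have hall : ∀ f ∈ insert e L, Cbd L f := by
      intro f hf
      rcases Finset.mem_insert.1 hf with rfl | hf
      · exact hcbd
      · have := laceOf_cbd hLc hf
        rwa [lace_laceOf_self hL] at this
    have hlace : laceOf 0 (insert e L) = L :=
      cbd_laceOf_eq (hconn e hedge) hL (Finset.subset_insert e L) hall
    refine Finset.mem_filter.2 ⟨?_, hedge, hnot, hlace⟩
    obtain ⟨h1, h2, h3⟩ := hedge
    exact Finset.mem_product.2 ⟨Finset.mem_range.2 (by omega), Finset.mem_range.2 (by omega)⟩

lemma lace_erase_conn_aux (hL : IsLace 0 b L) {e f : ℕ × ℕ} (he : e ∈ L) (hf : f ∈ L)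
    (hsnd : e.2 = f.2) (hlt : e.1 < f.1) : False := by
  have hconn := hL.1
  have hef : e ≠ f := by
    intro h
    rw [h] at hlt
    omega
  apply hL.2 f hf
  refine ⟨fun g hg => hconn.1 g (Finset.mem_erase.1 hg).2, ?_, ?_, ?_⟩
  · obtain ⟨g, hg, hg0⟩ := hconn.2.1
    rcases eq_or_ne g f with rfl | hne
    · omega
    · exact ⟨g, Finset.mem_erase.2 ⟨hne, hg⟩, hg0⟩
  · obtain ⟨g, hg, hgb⟩ := hconn.2.2.1
    rcases eq_or_ne g f with rfl | hne
    · exact ⟨e, Finset.mem_erase.2 ⟨hef, he⟩, by omega⟩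
    · exact ⟨g, Finset.mem_erase.2 ⟨hne, hg⟩, hgb⟩
  · intro c hc1 hc2
    obtain ⟨g, hg, hg1, hg2⟩ := hconn.2.2.2 c hc1 hc2
    rcases eq_or_ne g f with rfl | hne
    · exact ⟨e, Finset.mem_erase.2 ⟨hef, he⟩, by omega, by omega⟩
    · exact ⟨g, Finset.mem_erase.2 ⟨hne, hg⟩, hg1, hg2⟩

lemma lace_card_le (hL : IsLace 0 b L) : L.card ≤ b := by
  have hmaps : ∀ e ∈ L, e.2 ∈ Finset.Icc 1 b := by
    intro e he
    obtain ⟨h1, h2, h3⟩ := hL.1.1 e he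
    exact Finset.mem_Icc.2 ⟨by omega, h3⟩
  have hinj : Set.InjOn Prod.snd (L : Set (ℕ × ℕ)) := by
    intro e he f hf hef
    by_contra hne
    have h1 : e.1 ≠ f.1 := fun h => hne (Prod.ext h hef)
    rcases Nat.lt_or_ge e.1 f.1 with h | h
    · exact lace_erase_conn_aux hL he hf hef h
    · exact lace_erase_conn_aux hL hf he hef.symm (by omega)
  have := Finset.card_le_card_of_injOn _ hmaps hinj
  simpa using this

/-- Piece C: sum over connected graphs equals sum over laces with compatible-edge factors. -/
lemma piece_C (b : ℕ) (u : ℕ × ℕ → ℝ) :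
    ∑ Γ ∈ connGraphs b, ∏ e ∈ Γ, u e =
      ∑ N ∈ Finset.Icc 1 b, ∑ L ∈ lacesN 0 b N,
        (∏ e ∈ L, u e) * ∏ e ∈ compat 0 b L, (1 + u e) := by
  classical
  have hmaps : ∀ Γ ∈ connGraphs b,
      laceOf 0 Γ ∈ (connGraphs b).filter fun L => IsLace 0 b L := by
    intro Γ hΓ'
    obtain ⟨hsub, hconn⟩ := Finset.mem_filter.1 hΓ'
    rw [Finset.mem_powerset] at hsub
    exact Finset.mem_filter.2 ⟨Finset.mem_filter.2 ⟨Finset.mem_powerset.2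
      fun e he => hsub (laceOf_subset hconn he), laceOf_conn hconn⟩, laceOf_isLace hconn⟩
  rw [← Finset.sum_fiberwise_of_maps_to hmaps]
  have hfiber : ∀ L ∈ (connGraphs b).filter fun L => IsLace 0 b L,
      ∑ Γ ∈ (connGraphs b).filter (fun Γ => laceOf 0 Γ = L), ∏ e ∈ Γ, u e =
        (∏ e ∈ L, u e) * ∏ e ∈ compat 0 b L, (1 + u e) := by
    intro L hLmem
    obtain ⟨hLconn', hLlace⟩ := Finset.mem_filter.1 hLmem
    obtain ⟨hLsub', _⟩ := Finset.mem_filter.1 hLconn'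
    have hLsub := Finset.mem_powerset.1 hLsub'
    rw [prod_one_add, Finset.mul_sum]
    refine Finset.sum_nbij' (fun Γ => Γ \ L) (fun S => L ∪ S) ?_ ?_ ?_ ?_ ?_
    · intro Γ hΓ'
      obtain ⟨hΓmem, hΓlace⟩ := Finset.mem_filter.1 hΓ'
      obtain ⟨hΓsub', hΓconn⟩ := Finset.mem_filter.1 hΓmem
      have hΓsub := Finset.mem_powerset.1 hΓsub'
      show Γ \ L ∈ (compat 0 b L).powerset
      rw [Finset.mem_powerset]
      intro e he
      obtain ⟨heΓ, heL⟩ := Finset.mem_sdiff.1 he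
      refine (mem_compat_iff hLlace).2 ⟨mem_edgeSet.1 (hΓsub heΓ), heL, ?_⟩
      have := laceOf_cbd hΓconn heΓ
      rwa [hΓlace] at this
    · intro S hS
      rw [Finset.mem_powerset] at hS
      have hScompat : ∀ e ∈ S, IsEdgeOn 0 b e ∧ e ∉ L ∧ Cbd L e :=
        fun e he => (mem_compat_iff hLlace).1 (hS he)
      have hconnU : IsConnGraph 0 b (L ∪ S) := by
        refine conn_superset Finset.subset_union_left hLlace.1 fun e he => ?_
        rcases Finset.mem_union.1 he with h | h
        · exact hLlace.1.1 e h
        · exact (hScompat e h).1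
      show L ∪ S ∈ (connGraphs b).filter fun Γ => laceOf 0 Γ = L
      refine Finset.mem_filter.2 ⟨Finset.mem_filter.2 ⟨Finset.mem_powerset.2 ?_, hconnU⟩, ?_⟩
      · intro e he
        rcases Finset.mem_union.1 he with h | h
        · exact hLsub h
        · exact mem_edgeSet.2 (hScompat e h).1
      · refine cbd_laceOf_eq hconnU hLlace Finset.subset_union_left ?_
        intro e he
        rcases Finset.mem_union.1 he with h | h
        · have := laceOf_cbd hLlace.1 h
          rwa [lace_laceOf_self hLlace] at this
        · exact (hScompat e h).2.2
    · intro Γ hΓ'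
      obtain ⟨hΓmem, hΓlace⟩ := Finset.mem_filter.1 hΓ'
      obtain ⟨_, hΓconn⟩ := Finset.mem_filter.1 hΓmem
      have hLΓ : L ⊆ Γ := by
        rw [← hΓlace]
        exact laceOf_subset hΓconn
      show L ∪ (Γ \ L) = Γ
      exact Finset.union_sdiff_of_subset hLΓ
    · intro S hS
      rw [Finset.mem_powerset] at hS
      have hdisj : Disjoint L S := by
        rw [Finset.disjoint_left]
        intro e heL heS
        exact ((mem_compat_iff hLlace).1 (hS heS)).2.1 heL
      show (L ∪ S) \ L = S
      exact Finset.union_sdiff_cancel_left hdisj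
    · intro Γ hΓ'
      obtain ⟨hΓmem, hΓlace⟩ := Finset.mem_filter.1 hΓ'
      obtain ⟨_, hΓconn⟩ := Finset.mem_filter.1 hΓmem
      have hLΓ : L ⊆ Γ := by
        rw [← hΓlace]
        exact laceOf_subset hΓconn
      show ∏ e ∈ Γ, u e = (∏ e ∈ L, u e) * ∏ e ∈ Γ \ L, u e
      rw [← Finset.prod_union Finset.disjoint_sdiff, Finset.union_sdiff_of_subset hLΓ]
  rw [Finset.sum_congr rfl hfiber]
  have hmaps2 : ∀ L ∈ (connGraphs b).filter fun L => IsLace 0 b L,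
      L.card ∈ Finset.Icc 1 b := by
    intro L hLmem
    obtain ⟨_, hLlace⟩ := Finset.mem_filter.1 hLmem
    obtain ⟨e, he, _⟩ := hLlace.1.2.1
    exact Finset.mem_Icc.2 ⟨Finset.card_pos.2 ⟨e, he⟩, lace_card_le hLlace⟩
  rw [← Finset.sum_fiberwise_of_maps_to hmaps2]
  refine Finset.sum_congr rfl fun N hN => ?_
  refine Finset.sum_congr ?_ fun _ _ => rfl
  ext L
  constructor
  · intro h
    obtain ⟨hmem, hcard⟩ := Finset.mem_filter.1 h
    obtain ⟨hcg, hlace⟩ := Finset.mem_filter.1 hmem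
    obtain ⟨hsub', _⟩ := Finset.mem_filter.1 hcg
    have hsub := Finset.mem_powerset.1 hsub'
    exact Finset.mem_filter.2 ⟨Finset.mem_powerset.2
      fun e he => edgeSet_subset_product (hsub he), hlace, hcard⟩
  · intro h
    obtain ⟨hP, hlace, hcard⟩ := Finset.mem_filter.1 h
    refine Finset.mem_filter.2 ⟨Finset.mem_filter.2 ⟨Finset.mem_filter.2 ⟨?_, hlace.1⟩, hlace⟩, hcard⟩
    exact Finset.mem_powerset.2 fun e he => mem_edgeSet.2 (hlace.1.1 e he)

end LaceChar

section Assembly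
variable {d : ℕ}

noncomputable instance (d n : ℕ) (x y : Pt d) : Fintype (Walks d n x y) :=
  Fintype.ofFinite _

noncomputable instance (d : ℕ) : Fintype { u : Pt d // norm1 u = 1 } :=
  Fintype.ofFinite _

/-- Product of `(1 + λ U_{st})` over all edges on `[a,b]`. -/
def Kprod (lam : ℝ) (a b : ℕ) (w : ℕ → Pt d) : ℝ :=
  ∏ e ∈ edgeSet a b, (1 + lam * U w e.1 e.2)

/-- Sum over connected graphs on `[0,m]` of the product of `λ U_{st}`. -/
def Jsum (lam : ℝ) (m : ℕ) (w : ℕ → Pt d) : ℝ :=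
  ∑ Γ ∈ connGraphs m, ∏ e ∈ Γ, (lam * U w e.1 e.2)

lemma Kprod_congr {lam : ℝ} {a b : ℕ} {w w' : ℕ → Pt d}
    (h : ∀ s, a ≤ s → s ≤ b → w s = w' s) : Kprod lam a b w = Kprod lam a b w' := by
  refine Finset.prod_congr rfl fun e he => ?_
  obtain ⟨h1, h2, h3⟩ := mem_edgeSet.1 he
  rw [U_congr (h e.1 h1 (by omega)) (h e.2 (by omega) h3)
    (h (e.2 - 1) (by omega) (by omega))]

lemma Jsum_congr {lam : ℝ} {m : ℕ} {w w' : ℕ → Pt d}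
    (h : ∀ s, s ≤ m → w s = w' s) : Jsum lam m w = Jsum lam m w' := by
  refine Finset.sum_congr rfl fun Γ hΓ => Finset.prod_congr rfl fun e he => ?_
  have hsub := Finset.mem_powerset.1 (Finset.mem_filter.1 hΓ).1
  obtain ⟨h1, h2, h3⟩ := mem_edgeSet.1 (hsub he)
  rw [U_congr (h e.1 (by omega)) (h e.2 h3) (h (e.2 - 1) (by omega))]

/-- Truncation of a walk at time `m`. -/
def truncW (m : ℕ) (w : ℕ → Pt d) : ℕ → Pt d := fun s => w (min s m)

/-- Shift of a walk by `m` steps. -/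
def shiftW (m : ℕ) (w : ℕ → Pt d) : ℕ → Pt d := fun s => w (s + m)

/-- Concatenation of two walks at time `m`. -/
def glueW (m : ℕ) (w1 w2 : ℕ → Pt d) : ℕ → Pt d :=
  fun s => if s ≤ m then w1 s else w2 (s - m)

lemma U_shiftW {w : ℕ → Pt d} {m s t : ℕ} (hs : m ≤ s) (hst : s < t) :
    U (shiftW m w) (s - m) (t - m) = U w s t := by
  have h1 : s - m + m = s := by omega
  have h2 : t - m + m = t := by omega
  have h3 : t - m - 1 + m = t - 1 := by omega
  simp only [U, shiftW, h1, h2, h3]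

lemma Kprod_shift (lam : ℝ) {m n : ℕ} (hmn : m ≤ n) (w : ℕ → Pt d) :
    Kprod lam m n w = Kprod lam 0 (n - m) (shiftW m w) := by
  unfold Kprod
  refine Finset.prod_nbij' (fun e => (e.1 - m, e.2 - m)) (fun e => (e.1 + m, e.2 + m))
    ?_ ?_ ?_ ?_ ?_
  · intro e he
    obtain ⟨h1, h2, h3⟩ := mem_edgeSet.1 he
    show (e.1 - m, e.2 - m) ∈ edgeSet 0 (n - m)
    exact mem_edgeSet.2 ⟨Nat.zero_le _, by omega, by omega⟩
  · intro e he
    obtain ⟨h1, h2, h3⟩ := mem_edgeSet.1 he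
    show (e.1 + m, e.2 + m) ∈ edgeSet m n
    exact mem_edgeSet.2 ⟨by omega, by omega, by omega⟩
  · intro e he
    obtain ⟨h1, h2, h3⟩ := mem_edgeSet.1 he
    show (e.1 - m + m, e.2 - m + m) = e
    exact Prod.ext (by omega) (by omega)
  · intro e he
    obtain ⟨h1, h2, h3⟩ := mem_edgeSet.1 he
    show (e.1 + m - m, e.2 + m - m) = e
    exact Prod.ext (by omega) (by omega)
  · intro e he
    obtain ⟨h1, h2, h3⟩ := mem_edgeSet.1 he
    show (1 + lam * U w e.1 e.2) = (1 + lam * U (shiftW m w) (e.1 - m) (e.2 - m))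
    rw [U_shiftW h1 h2]

lemma isWalk_truncW {n m : ℕ} {x y v : Pt d} {w : ℕ → Pt d}
    (hw : IsWalk n x y w) (hm : m ≤ n) (hv : w m = v) : IsWalk m x v (truncW m w) := by
  refine ⟨?_, ?_, ?_⟩
  · show w (min 0 m) = x
    simpa using hw.1
  · intro s hs
    show w (min s m) = v
    rw [min_eq_right hs, hv]
  · intro s hs
    show norm1 (w (min (s + 1) m) - w (min s m)) = 1
    rw [min_eq_left (by omega), min_eq_left (by omega)]
    exact hw.2.2 s (by omega)

lemma isWalk_shiftW {n m : ℕ} {x y v : Pt d} {w : ℕ → Pt d}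
    (hw : IsWalk n x y w) (hv : w m = v) : IsWalk (n - m) v y (shiftW m w) := by
  refine ⟨?_, ?_, ?_⟩
  · show w (0 + m) = v
    rw [Nat.zero_add, hv]
  · intro s hs
    exact hw.2.1 (s + m) (by omega)
  · intro s hs
    show norm1 (w (s + 1 + m) - w (s + m)) = 1
    have h1 : s + 1 + m = (s + m) + 1 := by omega
    rw [h1]
    exact hw.2.2 (s + m) (by omega)

lemma isWalk_glueW {n m : ℕ} {x y v : Pt d} {w1 w2 : ℕ → Pt d} (hmn : m ≤ n)
    (h1 : IsWalk m x v w1) (h2 : IsWalk (n - m) v y w2) :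
    IsWalk n x y (glueW m w1 w2) := by
  have hv2 : w2 0 = v := h2.1
  refine ⟨?_, ?_, ?_⟩
  · show (if 0 ≤ m then w1 0 else w2 (0 - m)) = x
    rw [if_pos (Nat.zero_le m)]
    exact h1.1
  · intro s hs
    show (if s ≤ m then w1 s else w2 (s - m)) = y
    split_ifs with h
    · have hsm : s = m := by omega
      have hmn' : m = n := by omega
      have hv : w1 m = v := h1.2.1 m le_rfl
      have hxy : w2 0 = y := h2.2.1 0 (by omega)
      rw [hsm, hv, ← hv2, hxy]
    · exact h2.2.1 (s - m) (by omega)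
  · intro s hs
    rcases Nat.lt_or_ge s m with h | h
    · show norm1 ((if s + 1 ≤ m then w1 (s + 1) else w2 (s + 1 - m)) -
        (if s ≤ m then w1 s else w2 (s - m))) = 1
      rw [if_pos (by omega : s + 1 ≤ m), if_pos (by omega : s ≤ m)]
      exact h1.2.2 s h
    · show norm1 ((if s + 1 ≤ m then w1 (s + 1) else w2 (s + 1 - m)) -
        (if s ≤ m then w1 s else w2 (s - m))) = 1
      rw [if_neg (by omega : ¬ s + 1 ≤ m)]
      have hgs : (if s ≤ m then w1 s else w2 (s - m)) = w2 (s - m) := by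
        split_ifs with hsm
        · have hsm2 : s = m := le_antisymm hsm h
          subst hsm2
          rw [h1.2.1 s le_rfl, ← hv2, Nat.sub_self]
        · rfl
      rw [hgs]
      have h1' : s + 1 - m = (s - m) + 1 := by omega
      rw [h1']
      exact h2.2.2 (s - m) (by omega)

/-- Endpoints of `m`-step walks from the origin lie in a box. -/
def box (d m : ℕ) : Finset (Pt d) :=
  Fintype.piFinset fun _ : Fin d => Finset.Icc (-(m : ℤ)) (m : ℤ)

lemma walks_isEmpty_of_not_box {m : ℕ} {v : Pt d} (h : v ∉ box d m) :
    IsEmpty (Walks d m 0 v) := by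
  constructor
  intro w
  apply h
  show v ∈ Fintype.piFinset fun _ : Fin d => Finset.Icc (-(m : ℤ)) (m : ℤ)
  rw [Fintype.mem_piFinset]
  intro i
  have hb := isWalk_coord_bound w.2 m i
  have hv : w.1 m = v := w.2.2.1 m le_rfl
  rw [hv] at hb
  simp only [Pi.zero_apply, sub_zero] at hb
  rw [abs_le] at hb
  exact Finset.mem_Icc.2 ⟨hb.1, hb.2⟩

lemma mem_box_of_walk {m : ℕ} {v : Pt d} (w : Walks d m 0 v) : v ∈ box d m := by
  by_contra h
  exact (walks_isEmpty_of_not_box h).false w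

lemma piCoef_eq_sum (lam : ℝ) {m : ℕ} (hm : 1 ≤ m) (v : Pt d) :
    piCoef d lam m v = ∑ w : Walks d m 0 v, Jsum lam m w.1 := by
  classical
  simp only [piCoef, piN]
  have hstep : ∀ N ∈ Finset.Icc 1 m,
      (-1 : ℝ) ^ N * (lam ^ N * ∑' w : Walks d m 0 v, ∑ L ∈ lacesN 0 m N,
        (∏ e ∈ L, (-U w.1 e.1 e.2)) * ∏ e ∈ compat 0 m L, (1 + lam * U w.1 e.1 e.2)) =
      ∑ w : Walks d m 0 v, ∑ L ∈ lacesN 0 m N,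
        (∏ e ∈ L, (lam * U w.1 e.1 e.2)) * ∏ e ∈ compat 0 m L, (1 + lam * U w.1 e.1 e.2) := by
    intro N hN
    rw [tsum_fintype, Finset.mul_sum, Finset.mul_sum]
    refine Finset.sum_congr rfl fun w _ => ?_
    rw [Finset.mul_sum, Finset.mul_sum]
    refine Finset.sum_congr rfl fun L hL => ?_
    have hcard : L.card = N := (Finset.mem_filter.1 hL).2.2
    have h1 : ∏ e ∈ L, (lam * U w.1 e.1 e.2) = lam ^ N * ∏ e ∈ L, U w.1 e.1 e.2 := by
      rw [Finset.prod_mul_distrib, Finset.prod_const, hcard]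
    have h2 : ∏ e ∈ L, (-U w.1 e.1 e.2) = (-1 : ℝ) ^ N * ∏ e ∈ L, U w.1 e.1 e.2 := by
      have : ∀ e ∈ L, (-U w.1 e.1 e.2) = (-1 : ℝ) * U w.1 e.1 e.2 := by
        intro e _; ring
      rw [Finset.prod_congr rfl this, Finset.prod_mul_distrib, Finset.prod_const, hcard]
    rw [h1, h2]
    have hsq : (-1 : ℝ) ^ N * (-1 : ℝ) ^ N = 1 := by
      rw [← pow_add, ← two_mul, pow_mul]
      norm_num
    set P := ∏ e ∈ L, U w.1 e.1 e.2
    set Q := ∏ e ∈ compat 0 m L, (1 + lam * U w.1 e.1 e.2)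
    calc (-1 : ℝ) ^ N * (lam ^ N * ((-1 : ℝ) ^ N * P * Q))
        = ((-1 : ℝ) ^ N * (-1 : ℝ) ^ N) * (lam ^ N * P * Q) := by ring
      _ = lam ^ N * P * Q := by rw [hsq, one_mul]
      _ = lam ^ N * P * Q := rfl
  rw [Finset.sum_congr rfl hstep, Finset.sum_comm]
  refine Finset.sum_congr rfl fun w _ => ?_
  exact (piece_C m fun e => lam * U w.1 e.1 e.2).symm

lemma middle_term (lam : ℝ) {m n : ℕ} (hm1 : 1 ≤ m) (hmn : m ≤ n) (x : Pt d) :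
    ∑ w : Walks d n 0 x, Jsum lam m w.1 * Kprod lam m n w.1 =
      ∑' v : Pt d, piCoef d lam m v * cps d lam (n - m) v x := by
  classical
  rw [tsum_eq_sum (s := box d m) (f := fun v => piCoef d lam m v * cps d lam (n - m) v x)
    (fun v hv => by
      haveI := walks_isEmpty_of_not_box hv
      show piCoef d lam m v * cps d lam (n - m) v x = 0
      rw [piCoef_eq_sum lam hm1 v]
      rw [Finset.univ_eq_empty, Finset.sum_empty, zero_mul])]
  rw [← Finset.sum_fiberwise_of_maps_to
    (g := fun w : Walks d n 0 x => w.1 m) (t := box d m)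
    (fun w _ => mem_box_of_walk ⟨truncW m w.1, isWalk_truncW w.2 hmn rfl⟩)
    (fun w => Jsum lam m w.1 * Kprod lam m n w.1)]
  refine Finset.sum_congr rfl fun v hv => ?_
  rw [piCoef_eq_sum lam hm1 v]
  have hcps : cps d lam (n - m) v x = ∑ w2 : Walks d (n - m) v x, phi lam (n - m) w2.1 := by
    simp only [cps]
    exact tsum_fintype _
  rw [hcps, Finset.sum_mul_sum, ← Finset.sum_product']
  refine Finset.sum_bij'
    (fun w hw => ((⟨truncW m w.1, isWalk_truncW w.2 hmn
        (by simpa using (Finset.mem_filter.1 hw).2)⟩ : Walks d m 0 v),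
      (⟨shiftW m w.1, isWalk_shiftW w.2
        (by simpa using (Finset.mem_filter.1 hw).2)⟩ : Walks d (n - m) v x)))
    (fun p _ => (⟨glueW m p.1.1 p.2.1, isWalk_glueW hmn p.1.2 p.2.2⟩ : Walks d n 0 x))
    (fun w hw => Finset.mem_product.2 ⟨Finset.mem_univ _, Finset.mem_univ _⟩)
    (fun p hp => by
      refine Finset.mem_filter.2 ⟨Finset.mem_univ _, ?_⟩
      show glueW m p.1.1 p.2.1 m = v
      simp only [glueW, if_pos le_rfl]
      exact p.1.2.2.1 m le_rfl)
    (fun w hw => by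
      apply Subtype.ext
      funext s
      show glueW m (truncW m w.1) (shiftW m w.1) s = w.1 s
      simp only [glueW, truncW, shiftW]
      split_ifs with h
      · rw [min_eq_left h]
      · have hss : s - m + m = s := by omega
        rw [hss])
    (fun p hp => by
      refine Prod.ext ?_ ?_
      · apply Subtype.ext
        funext s
        show truncW m (glueW m p.1.1 p.2.1) s = p.1.1 s
        simp only [truncW, glueW, if_pos (min_le_right s m)]
        rcases le_or_gt s m with h | h
        · rw [min_eq_left h]
        · rw [min_eq_right (by omega)]
          rw [p.1.2.2.1 m le_rfl, p.1.2.2.1 s (by omega)]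
      · apply Subtype.ext
        funext s
        show shiftW m (glueW m p.1.1 p.2.1) s = p.2.1 s
        simp only [shiftW, glueW]
        split_ifs with h
        · have hs0 : s = 0 := by omega
          subst hs0
          rw [Nat.zero_add, p.1.2.2.1 m le_rfl, p.2.2.1]
        · have hss : s + m - m = s := by omega
          rw [hss])
    (fun w hw => by
      show Jsum lam m w.1 * Kprod lam m n w.1 =
        Jsum lam m (truncW m w.1) * phi lam (n - m) (shiftW m w.1)
      congr 1
      · exact Jsum_congr fun s hs => by
          show w.1 s = w.1 (min s m)
          rw [min_eq_left hs]
      · rw [phi_eq_prod]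
        exact Kprod_shift lam hmn w.1)

/-- Prepend a step at the origin to a walk. -/
def unshiftW (x : Pt d) (w : ℕ → Pt d) : ℕ → Pt d := fun s => if s = 0 then x else w (s - 1)

lemma isWalk_unshiftW {k : ℕ} {x u y : Pt d} {w : ℕ → Pt d} (hw : IsWalk k u y w)
    (hstep : norm1 (u - x) = 1) : IsWalk (k + 1) x y (unshiftW x w) := by
  refine ⟨if_pos rfl, ?_, ?_⟩
  · intro s hs
    show (if s = 0 then x else w (s - 1)) = y
    rw [if_neg (by omega)]
    exact hw.2.1 (s - 1) (by omega)
  · intro s hs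
    show norm1 ((if s + 1 = 0 then x else w (s + 1 - 1)) - (if s = 0 then x else w (s - 1))) = 1
    rw [if_neg (by omega)]
    have hidx : s + 1 - 1 = s := by omega
    rw [hidx]
    rcases Nat.eq_zero_or_pos s with rfl | hpos
    · rw [if_pos rfl, hw.1]
      exact hstep
    · rw [if_neg (by omega)]
      have h := hw.2.2 (s - 1) (by omega)
      rwa [show s - 1 + 1 = s by omega] at h

lemma first_term (lam : ℝ) (k : ℕ) (x : Pt d) :
    ∑ w : Walks d (k + 1) 0 x, Kprod lam 1 (k + 1) w.1 =
      ∑' u : { u : Pt d // norm1 u = 1 }, cps d lam k u.1 x := by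
  classical
  rw [tsum_fintype]
  have hstep : ∀ w : Walks d (k + 1) 0 x, norm1 (w.1 1) = 1 := by
    intro w
    have h := w.2.2.2 0 (by omega)
    rwa [w.2.1, sub_zero] at h
  rw [← Finset.sum_fiberwise_of_maps_to
    (g := fun w : Walks d (k + 1) 0 x => (⟨w.1 1, hstep w⟩ : { u : Pt d // norm1 u = 1 }))
    (t := Finset.univ) (fun w _ => Finset.mem_univ _)
    (fun w => Kprod lam 1 (k + 1) w.1)]
  refine Finset.sum_congr rfl fun u _ => ?_
  have hcps : cps d lam k u.1 x = ∑ w' : Walks d k u.1 x, phi lam k w'.1 := by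
    simp only [cps]
    exact tsum_fintype _
  rw [hcps]
  refine Finset.sum_bij'
    (fun w hw => (⟨shiftW 1 w.1, by
      have hv : w.1 1 = u.1 := congrArg Subtype.val (Finset.mem_filter.1 hw).2
      exact isWalk_shiftW (m := 1) w.2 hv⟩ : Walks d k u.1 x))
    (fun w' _ => (⟨unshiftW 0 w'.1, isWalk_unshiftW w'.2
      (by rw [sub_zero]; exact u.2)⟩ : Walks d (k + 1) 0 x))
    (fun w hw => Finset.mem_univ _)
    (fun w' hw' => by
      refine Finset.mem_filter.2 ⟨Finset.mem_univ _, ?_⟩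
      apply Subtype.ext
      show unshiftW 0 w'.1 1 = u.1
      show (if (1 : ℕ) = 0 then (0 : Pt d) else w'.1 (1 - 1)) = u.1
      rw [if_neg (by omega)]
      exact w'.2.1)
    (fun w hw => by
      apply Subtype.ext
      funext s
      show unshiftW 0 (shiftW 1 w.1) s = w.1 s
      rcases Nat.eq_zero_or_pos s with rfl | hpos
      · simp only [unshiftW, if_pos rfl]
        exact w.2.1.symm
      · have hss : s - 1 + 1 = s := by omega
        simp only [unshiftW, shiftW, if_neg (show ¬s = 0 by omega), hss])
    (fun w' hw' => by
      apply Subtype.ext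
      funext s
      show shiftW 1 (unshiftW 0 w'.1) s = w'.1 s
      have hss : s + 1 - 1 = s := by omega
      simp only [shiftW, unshiftW, if_neg (show ¬s + 1 = 0 by omega), hss])
    (fun w hw => by
      show Kprod lam 1 (k + 1) w.1 = phi lam k (shiftW 1 w.1)
      rw [phi_eq_prod]
      exact Kprod_shift lam (show 1 ≤ k + 1 by omega) w.1)

end Assembly

/-- **Proposition 3.2** (lace expansion, coefficient form): for every `d ≥ 1`,
`λ ∈ [0,1]`, `n ≥ 1` and `x ∈ ℤ^d`,
`c_n^λ(0,x) = Σ_{|u|=1} c_{n-1}^λ(u,x) + Σ_{m=1}^n Σ_v π_m(v) c_{n-m}^λ(v,x)`. -/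
theorem lace_expansion_identity (d : ℕ) (hd : 1 ≤ d) (lam : ℝ)
    (hlam0 : 0 ≤ lam) (hlam1 : lam ≤ 1) (n : ℕ) (hn : 1 ≤ n) (x : Pt d) :
    cps d lam n 0 x =
      (∑' u : { u : Pt d // norm1 u = 1 }, cps d lam (n - 1) u.1 x) +
      ∑ m ∈ Finset.Icc 1 n, ∑' v : Pt d, piCoef d lam m v * cps d lam (n - m) v x := by
  classical
  have h1 : cps d lam n 0 x = ∑ w : Walks d n 0 x, phi lam n w.1 := by
    simp only [cps]
    exact tsum_fintype _
  rw [h1]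
  have hphi : ∀ w : Walks d n 0 x, phi lam n w.1 =
      Kprod lam 1 n w.1 + ∑ m ∈ Finset.Icc 1 n, Jsum lam m w.1 * Kprod lam m n w.1 := by
    intro w
    rw [phi_eq_prod]
    exact piece_B n hn fun e => lam * U w.1 e.1 e.2
  rw [Finset.sum_congr rfl fun w _ => hphi w, Finset.sum_add_distrib, Finset.sum_comm]
  congr 1
  · obtain ⟨k, rfl⟩ : ∃ k, n = k + 1 := ⟨n - 1, by omega⟩
    rw [first_term lam k x]
    simp
  · exact Finset.sum_congr rfl fun m hm =>
      middle_term lam (Finset.mem_Icc.1 hm).1 (Finset.mem_Icc.1 hm).2 x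

end PrudentWalk
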